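/- arXiv:1902.04990 — 3 statements merged into one kernel-verified Lean document; each statement's English description precedes it below -/
import Mathlib

section
/- For every integer n ≥ 1 and every p ∈ [0, 1], the total variation distance between the binomial distribution Bin(n, p) and the Poisson distribution with parameter np is at most 2p, i.e. sup_{A ⊆ ℕ} |Bin(n,p)(A) − Poisson(np)(A)| ≤ 2p. -/
open MeasureTheory ProbabilityTheory

open Finset Real
open scoped Nat Classical NNReal ENNReal


namespace BPTV

noncomputable def pois (lam : ℝ) (k : ℕ) : ℝ := Real.exp (-lam) * lam ^ k / k !
noncomputable def u (lam : ℝ) (k : ℕ) : ℝ := ∑ i ∈ range k, lam ^ i / i !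
noncomputable def tail (lam : ℝ) (k : ℕ) : ℝ := Real.exp lam - u lam k

noncomputable def h (lam : ℝ) (j : ℕ) : ℕ → ℝ
  | 0 => 0
  | (k+1) => if j ≤ k then (k ! * tail lam (k+1)) / lam ^ (k+1)
             else -((k ! * u lam (k+1)) / lam ^ (k+1))

variable {lam : ℝ}

lemma summable_expser (lam : ℝ) : Summable (fun i : ℕ => lam ^ i / i !) :=
  Real.summable_pow_div_factorial lam

lemma tsum_expser (lam : ℝ) : ∑' i : ℕ, lam ^ i / i ! = Real.exp lam := by
  rw [Real.exp_eq_exp_ℝ]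
  exact (NormedSpace.expSeries_div_hasSum_exp lam).tsum_eq

lemma tail_eq (lam : ℝ) (k : ℕ) : tail lam k = ∑' i : ℕ, lam ^ (i + k) / (i + k)! := by
  have := Summable.sum_add_tsum_nat_add (f := fun i : ℕ => lam ^ i / i !) k (summable_expser lam)
  rw [tail, u, ← tsum_expser lam, ← this]
  ring

lemma summable_tailser (lam : ℝ) (k : ℕ) : Summable (fun i : ℕ => lam ^ (i + k) / (i + k)!) :=
  ((summable_nat_add_iff k).mpr (summable_expser lam))

lemma tail_nonneg (hl : 0 ≤ lam) (k : ℕ) : 0 ≤ tail lam k := by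
  rw [tail_eq]
  exact tsum_nonneg (fun i => by positivity)

lemma u_nonneg (hl : 0 ≤ lam) (k : ℕ) : 0 ≤ u lam k :=
  Finset.sum_nonneg (fun i _ => by positivity)

lemma pois_nonneg (hl : 0 ≤ lam) (k : ℕ) : 0 ≤ pois lam k := by
  unfold pois; positivity

lemma u_succ (lam : ℝ) (k : ℕ) : u lam (k+1) = u lam k + lam ^ k / k ! := by
  rw [u, u, Finset.sum_range_succ]

-- L1 : lam * u k ≤ k * (u (k+1) - 1)
lemma L1 (hl : 0 ≤ lam) (k : ℕ) : lam * u lam k ≤ k * (u lam (k+1) - 1) := by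
  have h1 : lam * u lam k = ∑ i ∈ range k, (i+1) * (lam ^ (i+1) / (i+1)!) := by
    rw [u, Finset.mul_sum]
    refine Finset.sum_congr rfl (fun i _ => ?_)
    rw [Nat.factorial_succ]
    push_cast
    field_simp
    ring
  have h2 : u lam (k+1) - 1 = ∑ i ∈ range k, lam ^ (i+1) / (i+1)! := by
    rw [u, Finset.sum_range_succ']
    simp
  rw [h1, h2, Finset.mul_sum]
  refine Finset.sum_le_sum (fun i hi => ?_)
  have hik : (i:ℝ) + 1 ≤ k := by
    have := Finset.mem_range.mp hi
    exact_mod_cast this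
  have : (0:ℝ) ≤ lam ^ (i+1) / (i+1)! := by positivity
  push_cast
  nlinarith

-- L2 : k * tail (k+1) ≤ lam * tail k
lemma L2 (hl : 0 ≤ lam) (k : ℕ) : (k:ℝ) * tail lam (k+1) ≤ lam * tail lam k := by
  rw [tail_eq, tail_eq, ← tsum_mul_left, ← tsum_mul_left]
  refine Summable.tsum_le_tsum (fun i => ?_) ((summable_tailser lam (k+1)).mul_left _)
    ((summable_tailser lam k).mul_left _)
  have e1 : lam * (lam ^ (i + k) / (i + k)!) = ((i:ℝ)+k+1) * (lam ^ (i + (k+1)) / (i + (k+1))!) := by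
    have : i + (k+1) = (i + k) + 1 := by ring
    rw [this, Nat.factorial_succ, pow_succ]
    push_cast
    field_simp
  rw [e1]
  have : (0:ℝ) ≤ lam ^ (i + (k+1)) / (i + (k+1))! := by positivity
  have hk : (k:ℝ) ≤ (i:ℝ)+k+1 := by
    have : (0:ℝ) ≤ (i:ℝ) := Nat.cast_nonneg i
    linarith
  nlinarith

lemma u_one (lam : ℝ) : u lam 1 = 1 := by simp [u]

lemma Stein_h (hl : 0 < lam) (j k : ℕ) :
    lam * h lam j (k+1) - k * h lam j k
      = (if j = k then Real.exp lam * k ! / lam ^ k else 0) - 1 := by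
  have hlne : lam ≠ 0 := ne_of_gt hl
  cases k with
  | zero =>
      simp only [h, Nat.cast_zero, zero_mul, sub_zero, Nat.le_zero]
      rcases eq_or_ne j 0 with hj | hj
      · subst hj
        simp only [if_pos rfl, if_true, Nat.factorial_zero, Nat.cast_one]
        rw [tail, u_one]
        field_simp
        ring
      · simp only [if_neg hj]
        rw [u_one]
        field_simp
        simp
  | succ m =>
      have hfact : ((m+1)! : ℝ) = (m+1) * m ! := by
        rw [Nat.factorial_succ]; push_cast; ring
      have htail : tail lam (m+2) = tail lam (m+1) - lam ^ (m+1) / (m+1)! := by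
        rw [tail, tail, u_succ]; ring
      have husucc : u lam (m+2) = u lam (m+1) + lam ^ (m+1) / (m+1)! := u_succ lam (m+1)
      rcases le_or_gt j m with hj | hj
      · have hj1 : j ≤ m + 1 := le_trans hj (Nat.le_succ m)
        have hjne : j ≠ m + 1 := by omega
        simp only [h, if_pos hj, if_pos hj1, if_neg hjne]
        rw [htail, hfact]
        have hfm : (m ! : ℝ) ≠ 0 := by positivity
        field_simp
        push_cast
        ring
      · rcases eq_or_ne j (m+1) with hje | hjne
        · subst hje
          simp only [h, if_neg (by omega : ¬ m + 1 ≤ m), if_pos (le_refl (m+1)), if_pos rfl,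
            if_true]
          rw [htail, hfact, tail]
          have hfm : (m ! : ℝ) ≠ 0 := by positivity
          field_simp
          push_cast
          ring
        · have hj1 : ¬ j ≤ m + 1 := by omega
          have hj0 : ¬ j ≤ m := by omega
          simp only [h, if_neg hj1, if_neg hj0, if_neg hjne]
          rw [husucc, hfact]
          have hfm : (m ! : ℝ) ≠ 0 := by positivity
          field_simp
          push_cast
          ring

-- d j k := h j (k+1) - h j k, for k = m+1 ≥ 1
lemma dsign (hl : 0 < lam) {j m : ℕ} (hj : j ≠ m + 1) :
    h lam j (m+2) - h lam j (m+1) ≤ 0 := by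
  have hp1 : (0:ℝ) < lam ^ (m+1) := pow_pos hl _
  have hp2 : (0:ℝ) < lam ^ (m+2) := pow_pos hl _
  have hfact : ((m+1)! : ℝ) = (m+1) * m ! := by rw [Nat.factorial_succ]; push_cast; ring
  have hfm : (0:ℝ) < (m ! : ℝ) := by positivity
  rcases le_or_gt j m with hjm | hjm
  · have hj1 : j ≤ m + 1 := le_trans hjm (Nat.le_succ m)
    simp only [h, if_pos hjm, if_pos hj1]
    rw [sub_nonpos, div_le_div_iff₀ hp2 hp1, hfact]
    have hL2 : ((m+1:ℕ):ℝ) * tail lam (m+2) ≤ lam * tail lam (m+1) := L2 (le_of_lt hl) (m+1)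
    have e : lam ^ (m+2) = lam ^ (m+1) * lam := by ring
    rw [e]
    push_cast at hL2 ⊢
    nlinarith [mul_le_mul_of_nonneg_left hL2 (by positivity : (0:ℝ) ≤ (m ! : ℝ) * lam ^ (m+1))]
  · have hj0 : ¬ j ≤ m := by omega
    have hj1 : ¬ j ≤ m + 1 := by omega
    simp only [h, if_neg hj0, if_neg hj1]
    rw [sub_nonpos, neg_le_neg_iff, div_le_div_iff₀ hp1 hp2, hfact]
    have hL1 : lam * u lam (m+1) ≤ ((m+1:ℕ):ℝ) * (u lam (m+2) - 1) := L1 (le_of_lt hl) (m+1)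
    have hu : 0 ≤ u lam (m+2) := u_nonneg (le_of_lt hl) _
    have e : lam ^ (m+2) = lam ^ (m+1) * lam := by ring
    rw [e]
    push_cast at hL1 ⊢
    nlinarith [mul_le_mul_of_nonneg_left hL1 (by positivity : (0:ℝ) ≤ (m ! : ℝ) * lam ^ (m+1))]

lemma dkk_nonneg (hl : 0 < lam) (m : ℕ) :
    0 ≤ h lam (m+1) (m+2) - h lam (m+1) (m+1) := by
  simp only [h, if_pos (le_refl (m+1)), if_neg (by omega : ¬ m + 1 ≤ m)]
  have h1 : 0 ≤ ((m+1)! : ℝ) * tail lam (m+2) / lam ^ (m+2) := by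
    have := tail_nonneg (le_of_lt hl) (m+2); positivity
  have h2 : 0 ≤ (m ! : ℝ) * u lam (m+1) / lam ^ (m+1) := by
    have := u_nonneg (le_of_lt hl) (m+1); positivity
  linarith

lemma dkk_le (hl : 0 < lam) (m : ℕ) :
    pois lam (m+1) * (h lam (m+1) (m+2) - h lam (m+1) (m+1)) ≤ 1 / lam := by
  simp only [h, if_pos (le_refl (m+1)), if_neg (by omega : ¬ m + 1 ≤ m), pois]
  have hfact : ((m+1)! : ℝ) = (m+1) * m ! := by rw [Nat.factorial_succ]; push_cast; ring
  have hfm : (0:ℝ) < (m ! : ℝ) := by positivity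
  have hE : 0 < Real.exp (-lam) := Real.exp_pos _
  -- LHS = exp(-lam) * (tail (m+2) / lam + u (m+1) / (m+1))
  have key : Real.exp (-lam) * lam ^ (m+1) / (m+1)! *
      (((m+1)! : ℝ) * tail lam (m+2) / lam ^ (m+2) - -((m !:ℝ) * u lam (m+1) / lam ^ (m+1)))
      = Real.exp (-lam) * (tail lam (m+2) / lam + u lam (m+1) / (m+1)) := by
    rw [hfact]
    field_simp
    ring
  rw [key]
  have hL1 := L1 (le_of_lt hl) (m+1)
  have step : tail lam (m+2) / lam + u lam (m+1) / (m+1)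
      ≤ (tail lam (m+2) + (u lam (m+2) - 1)) / lam := by
    have hm1 : (0:ℝ) < (m:ℝ)+1 := by positivity
    rw [div_add_div _ _ (ne_of_gt hl) (ne_of_gt hm1), div_le_div_iff₀ (by positivity) hl]
    push_cast at hL1 ⊢
    nlinarith
  have step2 : (tail lam (m+2) + (u lam (m+2) - 1)) / lam = (Real.exp lam - 1)/lam := by
    rw [tail]; ring
  have step3 : Real.exp (-lam) * ((Real.exp lam - 1)/lam) ≤ 1 / lam := by
    rw [Real.exp_neg]
    have h2 : 0 < Real.exp lam := Real.exp_pos lam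
    have hx : (Real.exp lam)⁻¹ * (Real.exp lam - 1) ≤ 1 := by
      rw [inv_mul_le_iff₀ h2]; nlinarith [Real.add_one_le_exp lam]
    calc (Real.exp lam)⁻¹ * ((Real.exp lam - 1)/lam)
        = ((Real.exp lam)⁻¹ * (Real.exp lam - 1))/lam := by ring
      _ ≤ 1/lam := by gcongr
  calc Real.exp (-lam) * (tail lam (m+2) / lam + u lam (m+1) / (m+1))
      ≤ Real.exp (-lam) * ((tail lam (m+2) + (u lam (m+2) - 1)) / lam) := by
        apply mul_le_mul_of_nonneg_left step (le_of_lt hE)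
    _ = Real.exp (-lam) * ((Real.exp lam - 1)/lam) := by rw [step2]
    _ ≤ 1 / lam := step3
lemma h_zero (lam : ℝ) (j : ℕ) : h lam j 0 = 0 := rfl

lemma h_abs_le (lam : ℝ) (j k : ℕ) : |h lam j k| ≤ |h lam 0 k| + |h lam k k| := by
  cases k with
  | zero => simp [h_zero]
  | succ m =>
    rcases le_or_gt j m with hj | hj
    · have e : h lam j (m+1) = h lam 0 (m+1) := by
        simp only [h, if_pos hj, if_pos (Nat.zero_le m)]
      rw [e]; exact le_add_of_nonneg_right (abs_nonneg _)
    · have e : h lam j (m+1) = h lam (m+1) (m+1) := by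
        simp only [h, if_neg (by omega : ¬ j ≤ m), if_neg (by omega : ¬ m + 1 ≤ m)]
      rw [e]; exact le_add_of_nonneg_left (abs_nonneg _)

lemma summable_pois (lam : ℝ) : Summable (pois lam) := by
  have e : pois lam = fun k => Real.exp (-lam) * (lam ^ k / k !) :=
    funext fun k => by rw [pois, mul_div_assoc]
  rw [e]; exact (summable_expser lam).mul_left _

lemma summable_wh (hl : 0 ≤ lam) (w : ℕ → ℝ) (hw : ∀ j, |w j| ≤ 1) (k : ℕ) :
    Summable (fun j => w j * (pois lam j * h lam j k)) := by
  have hb : Summable (fun j => pois lam j * (|h lam 0 k| + |h lam k k|)) :=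
    (summable_pois lam).mul_right _
  refine summable_abs_iff.mp (Summable.of_nonneg_of_le (fun j => abs_nonneg _) (fun j => ?_) hb)
  have hpn := pois_nonneg hl j
  calc |w j * (pois lam j * h lam j k)| = |w j| * (pois lam j * |h lam j k|) := by
        rw [abs_mul, abs_mul, abs_of_nonneg hpn]
    _ ≤ 1 * (pois lam j * (|h lam 0 k| + |h lam k k|)) := by
        have := h_abs_le lam j k
        have h1 : pois lam j * |h lam j k| ≤ pois lam j * (|h lam 0 k| + |h lam k k|) :=
          mul_le_mul_of_nonneg_left this hpn
        have h2 : 0 ≤ pois lam j * |h lam j k| := mul_nonneg hpn (abs_nonneg _)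
        nlinarith [hw j, abs_nonneg (w j)]
    _ = pois lam j * (|h lam 0 k| + |h lam k k|) := one_mul _

noncomputable def ind (A : Set ℕ) (j : ℕ) : ℝ := if j ∈ A then 1 else 0

lemma ind01 (A : Set ℕ) (j : ℕ) : ind A j = 0 ∨ ind A j = 1 := by
  unfold ind; split <;> simp

lemma abs_ind_le (A : Set ℕ) (j : ℕ) : |ind A j| ≤ 1 := by
  rcases ind01 A j with h | h <;> rw [h] <;> norm_num

noncomputable def fA (lam : ℝ) (A : Set ℕ) (k : ℕ) : ℝ :=
  ∑' j, ind A j * (pois lam j * h lam j k)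

noncomputable def FFA (lam : ℝ) (A : Set ℕ) : ℝ := ∑' j, ind A j * pois lam j

lemma summable_FFA (hl : 0 ≤ lam) (A : Set ℕ) : Summable (fun j => ind A j * pois lam j) := by
  refine Summable.of_nonneg_of_le (fun j => ?_) (fun j => ?_) (summable_pois lam)
  · rcases ind01 A j with h | h <;> simp [h, pois_nonneg hl j]
  · rcases ind01 A j with h | h <;> simp [h, pois_nonneg hl j]

lemma pois_mul_E (hl : 0 < lam) (k : ℕ) :
    pois lam k * (Real.exp lam * k ! / lam ^ k) = 1 := by
  rw [pois, Real.exp_neg]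
  have h1 : (0:ℝ) < (k ! : ℝ) := by positivity
  have h2 : (0:ℝ) < lam ^ k := pow_pos hl k
  have h3 : (0:ℝ) < Real.exp lam := Real.exp_pos lam
  field_simp

lemma Stein_f (hl : 0 < lam) (A : Set ℕ) (k : ℕ) :
    lam * fA lam A (k+1) - k * fA lam A k = ind A k - FFA lam A := by
  have S1 := summable_wh (le_of_lt hl) (ind A) (abs_ind_le A) (k+1)
  have S0 := summable_wh (le_of_lt hl) (ind A) (abs_ind_le A) k
  rw [fA, fA, ← tsum_mul_left, ← tsum_mul_left,
    ← ((S1.mul_left lam).hasSum.sub ((S0.mul_left (k:ℝ)).hasSum)).tsum_eq]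
  have e : ∀ j, lam * (ind A j * (pois lam j * h lam j (k+1)))
      - k * (ind A j * (pois lam j * h lam j k))
      = (if j = k then ind A k else 0) - ind A j * pois lam j := by
    intro j
    have e1 : lam * (ind A j * (pois lam j * h lam j (k+1)))
        - k * (ind A j * (pois lam j * h lam j k))
        = ind A j * pois lam j * (lam * h lam j (k+1) - k * h lam j k) := by ring
    rw [e1, Stein_h hl j k]
    rcases eq_or_ne j k with rfl | hne
    · rw [if_pos rfl, if_pos rfl, mul_sub, mul_one]
      have : ind A j * pois lam j * (Real.exp lam * j ! / lam ^ j)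
          = ind A j * (pois lam j * (Real.exp lam * j ! / lam ^ j)) := by ring
      rw [this, pois_mul_E hl j, mul_one]
    · rw [if_neg hne, if_neg hne]; ring
  rw [tsum_congr e,
    (((hasSum_ite_eq k (ind A k)).summable).hasSum.sub
      (summable_FFA (le_of_lt hl) A).hasSum).tsum_eq,
    tsum_ite_eq k (fun _ => ind A k), FFA]

lemma sum_pois_range (lam : ℝ) (k : ℕ) :
    ∑ j ∈ range k, pois lam j = Real.exp (-lam) * u lam k := by
  rw [u, Finset.mul_sum]
  exact Finset.sum_congr rfl (fun j _ => by rw [pois, mul_div_assoc])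

lemma tsum_pois_tail (lam : ℝ) (k : ℕ) :
    ∑' i, pois lam (i + k) = Real.exp (-lam) * tail lam k := by
  rw [tail_eq, ← tsum_mul_left]
  exact tsum_congr (fun i => by rw [pois, mul_div_assoc])

lemma summable_ph (hl : 0 ≤ lam) (k : ℕ) : Summable (fun j => pois lam j * h lam j k) := by
  have := summable_wh hl (fun _ => 1) (fun _ => by norm_num) k
  exact this.congr (fun j => one_mul _)

lemma sumzero (hl : 0 < lam) (k : ℕ) : ∑' j, pois lam j * h lam j k = 0 := by
  cases k with
  | zero => simp [h_zero]
  | succ m =>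
    have S := summable_ph (le_of_lt hl) (m+1)
    rw [← Summable.sum_add_tsum_nat_add (m+1) S]
    have e1 : ∑ j ∈ range (m+1), pois lam j * h lam j (m+1)
        = (Real.exp (-lam) * u lam (m+1)) * ((m ! * tail lam (m+1)) / lam ^ (m+1)) := by
      rw [← sum_pois_range lam (m+1), Finset.sum_mul]
      refine Finset.sum_congr rfl (fun j hj => ?_)
      have hjm : j ≤ m := Nat.lt_succ_iff.mp (Finset.mem_range.mp hj)
      simp only [h, if_pos hjm]
    have e2 : ∑' i, pois lam (i + (m+1)) * h lam (i + (m+1)) (m+1)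
        = (Real.exp (-lam) * tail lam (m+1)) * (-((m ! * u lam (m+1)) / lam ^ (m+1))) := by
      rw [← tsum_pois_tail lam (m+1), ← tsum_mul_right]
      refine tsum_congr (fun i => ?_)
      simp only [h, if_neg (by omega : ¬ i + (m+1) ≤ m)]
    rw [e1, e2]
    ring
lemma summable_wd (hl : 0 ≤ lam) (w : ℕ → ℝ) (hw : ∀ j, |w j| ≤ 1) (m : ℕ) :
    Summable (fun j => w j * (pois lam j * (h lam j (m+2) - h lam j (m+1)))) := by
  have := (summable_wh hl w hw (m+2)).sub (summable_wh hl w hw (m+1))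
  exact this.congr (fun j => by ring)

lemma tsum_wd_le (hl : 0 < lam) (w : ℕ → ℝ) (hw : ∀ j, w j = 0 ∨ w j = 1) (m : ℕ) :
    ∑' j, w j * (pois lam j * (h lam j (m+2) - h lam j (m+1))) ≤ 1/lam := by
  have hw1 : ∀ j, |w j| ≤ 1 := fun j => by rcases hw j with h | h <;> rw [h] <;> norm_num
  set c := pois lam (m+1) * (h lam (m+1) (m+2) - h lam (m+1) (m+1)) with hc
  have hcn : 0 ≤ c := mul_nonneg (pois_nonneg (le_of_lt hl) _) (dkk_nonneg hl m)
  have step : ∑' j, w j * (pois lam j * (h lam j (m+2) - h lam j (m+1)))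
      ≤ ∑' j, (if j = m+1 then c else 0) := by
    refine Summable.tsum_le_tsum (fun j => ?_) (summable_wd (le_of_lt hl) w hw1 m)
      ((hasSum_ite_eq (m+1) c).summable)
    rcases eq_or_ne j (m+1) with rfl | hne
    · rw [if_pos rfl, ← hc]
      rcases hw (m+1) with h | h <;> rw [h]
      · linarith
      · linarith
    · rw [if_neg hne]
      have hd : h lam j (m+2) - h lam j (m+1) ≤ 0 := dsign hl hne
      have : pois lam j * (h lam j (m+2) - h lam j (m+1)) ≤ 0 :=
        mul_nonpos_of_nonneg_of_nonpos (pois_nonneg (le_of_lt hl) _) hd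
      rcases hw j with h | h <;> rw [h] <;> linarith
  rw [tsum_ite_eq (m+1) (fun _ => c)] at step
  exact le_trans step (dkk_le hl m)

lemma tsum_d_zero (hl : 0 < lam) (m : ℕ) :
    ∑' j, pois lam j * (h lam j (m+2) - h lam j (m+1)) = 0 := by
  have e : ∑' j, pois lam j * (h lam j (m+2) - h lam j (m+1))
      = ∑' j, (pois lam j * h lam j (m+2) - pois lam j * h lam j (m+1)) :=
    tsum_congr (fun j => by ring)
  rw [e, ((summable_ph (le_of_lt hl) (m+2)).hasSum.sub
    (summable_ph (le_of_lt hl) (m+1)).hasSum).tsum_eq, sumzero hl, sumzero hl, sub_zero]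

lemma deltaf_abs (hl : 0 < lam) (A : Set ℕ) (m : ℕ) :
    |fA lam A (m+2) - fA lam A (m+1)| ≤ 1/lam := by
  have ht : fA lam A (m+2) - fA lam A (m+1)
      = ∑' j, ind A j * (pois lam j * (h lam j (m+2) - h lam j (m+1))) := by
    rw [fA, fA, ← ((summable_wh (le_of_lt hl) (ind A) (abs_ind_le A) (m+2)).hasSum.sub
      (summable_wh (le_of_lt hl) (ind A) (abs_ind_le A) (m+1)).hasSum).tsum_eq]
    exact (tsum_congr (fun j => by ring)).symm
  have upper : fA lam A (m+2) - fA lam A (m+1) ≤ 1/lam := by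
    rw [ht]; exact tsum_wd_le hl (ind A) (ind01 A) m
  have hcw : ∀ j, (1 - ind A j) = 0 ∨ (1 - ind A j) = 1 := by
    intro j; rcases ind01 A j with h | h <;> rw [h] <;> norm_num
  have hcw1 : ∀ j, |1 - ind A j| ≤ 1 := fun j => by rcases hcw j with h | h <;> rw [h] <;> norm_num
  have split : fA lam A (m+2) - fA lam A (m+1)
      = - ∑' j, (1 - ind A j) * (pois lam j * (h lam j (m+2) - h lam j (m+1))) := by
    rw [ht]
    have e : ∀ j, ind A j * (pois lam j * (h lam j (m+2) - h lam j (m+1)))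
        = pois lam j * (h lam j (m+2) - h lam j (m+1))
          - (1 - ind A j) * (pois lam j * (h lam j (m+2) - h lam j (m+1))) := fun j => by ring
    rw [tsum_congr e,
     ((((summable_ph (le_of_lt hl) (m+2)).sub (summable_ph (le_of_lt hl) (m+1))).congr
        (fun j => by ring : ∀ j, _ = pois lam j * (h lam j (m+2) - h lam j (m+1)))).hasSum.sub
        (summable_wd (le_of_lt hl) _ hcw1 m).hasSum).tsum_eq,
      tsum_d_zero hl m, zero_sub]
  have lower : -(1/lam) ≤ fA lam A (m+2) - fA lam A (m+1) := by
    rw [split, neg_le_neg_iff]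
    exact tsum_wd_le hl _ hcw m
  exact abs_le.mpr ⟨lower, upper⟩
noncomputable def bb (n : ℕ) (q : ℝ) (k : ℕ) : ℝ := q ^ k * (1-q) ^ (n-k) * (n.choose k)
noncomputable def bb' (n : ℕ) (q : ℝ) (j : ℕ) : ℝ := q ^ j * (1-q) ^ (n-1-j) * ((n-1).choose j)

lemma bb_nonneg {q : ℝ} (hq0 : 0 ≤ q) (hq1 : q ≤ 1) (n k : ℕ) : 0 ≤ bb n q k := by
  unfold bb
  have : 0 ≤ 1 - q := by linarith
  positivity

lemma bb'_nonneg {q : ℝ} (hq0 : 0 ≤ q) (hq1 : q ≤ 1) (n j : ℕ) : 0 ≤ bb' n q j := by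
  unfold bb'
  have : 0 ≤ 1 - q := by linarith
  positivity

lemma sum_bb (n : ℕ) (q : ℝ) : ∑ k ∈ range (n+1), bb n q k = 1 := by
  have := add_pow (R := ℝ) q (1-q) n
  simp only [add_sub_cancel, one_pow] at this
  simp only [bb]
  exact this.symm

lemma sum_bb' (m : ℕ) (q : ℝ) : ∑ j ∈ range (m+1), bb' (m+1) q j = 1 := by
  have := sum_bb m q
  rw [← this]
  refine Finset.sum_congr rfl (fun j _ => ?_)
  simp [bb, bb', Nat.add_sub_cancel]

lemma pascal (m : ℕ) (q : ℝ) (k : ℕ) (hk : k < m + 1) :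
    bb (m+1) q (k+1) = (1-q) * bb' (m+1) q (k+1) + q * bb' (m+1) q k := by
  simp only [bb, bb', Nat.add_sub_cancel, Nat.succ_sub_succ, Nat.sub_zero]
  rcases eq_or_lt_of_le (Nat.lt_succ_iff.mp hk) with rfl | hlt
  · rw [Nat.choose_succ_self, Nat.choose_self, Nat.sub_self,
      (by omega : k - (k+1) = 0)]
    simp only [pow_zero, Nat.cast_zero, Nat.cast_one, Nat.choose_self]
    ring
  · have e1 : m - k = (m - (k+1)) + 1 := by omega
    rw [Nat.choose_succ_succ, e1, pow_succ]
    push_cast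
    ring

lemma E1 (m : ℕ) (q : ℝ) (f : ℕ → ℝ) :
    ∑ k ∈ range (m+2), (k:ℝ) * bb (m+1) q k * f k
      = ((m+1:ℕ):ℝ) * q * ∑ j ∈ range (m+1), bb' (m+1) q j * f (j+1) := by
  rw [Finset.sum_range_succ' (fun k => (k:ℝ) * bb (m+1) q k * f k) (m+1)]
  simp only [Nat.cast_zero, zero_mul, add_zero]
  rw [Finset.mul_sum]
  refine Finset.sum_congr rfl (fun j hj => ?_)
  simp only [bb, bb', Nat.add_sub_cancel, Nat.succ_sub_succ, Nat.sub_zero]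
  have hch : ((m+1) : ℝ) * (m.choose j : ℝ) = ((m+1).choose (j+1) : ℝ) * ((j+1 : ℕ) : ℝ) := by
    exact_mod_cast congrArg (Nat.cast (R := ℝ)) (Nat.add_one_mul_choose_eq m j)
  push_cast at hch ⊢
  linear_combination (-(q^(j+1) * (1-q)^(m-j) * f (j+1))) * hch


lemma E2 (m : ℕ) (q : ℝ) (f : ℕ → ℝ) :
    ∑ k ∈ range (m+2), bb (m+1) q k * f (k+1)
      = ∑ j ∈ range (m+1), bb' (m+1) q j * ((1-q) * f (j+1) + q * f (j+2)) := by
  have hz : bb' (m+1) q (m+1) = 0 := by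
    simp [bb', Nat.add_sub_cancel, Nat.choose_succ_self]
  have hb0 : bb (m+1) q 0 = (1-q) * bb' (m+1) q 0 := by
    simp [bb, bb', Nat.add_sub_cancel, pow_succ]
    ring
  have dist : ∑ j ∈ range (m+1), bb' (m+1) q j * ((1-q) * f (j+1) + q * f (j+2))
      = (1-q) * ∑ j ∈ range (m+1), bb' (m+1) q j * f (j+1)
        + q * ∑ j ∈ range (m+1), bb' (m+1) q j * f (j+2) := by
    rw [Finset.mul_sum, Finset.mul_sum, ← Finset.sum_add_distrib]
    exact Finset.sum_congr rfl (fun j _ => by ring)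
  have shift : ∑ j ∈ range (m+1), bb' (m+1) q j * f (j+1)
      = bb' (m+1) q 0 * f 1 + ∑ k ∈ range (m+1), bb' (m+1) q (k+1) * f (k+2) := by
    have h1 := Finset.sum_range_succ' (fun j => bb' (m+1) q j * f (j+1)) (m+1)
    rw [Finset.sum_range_succ (fun j => bb' (m+1) q j * f (j+1)) (m+1), hz, zero_mul,
      add_zero] at h1
    exact h1.trans (add_comm _ _)
  have main : ∑ k ∈ range (m+2), bb (m+1) q k * f (k+1)
      = bb (m+1) q 0 * f 1 + ∑ k ∈ range (m+1), bb (m+1) q (k+1) * f (k+2) := by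
    have h1 := Finset.sum_range_succ' (fun k => bb (m+1) q k * f (k+1)) (m+1)
    exact h1.trans (add_comm _ _)
  have step : ∀ k ∈ range (m+1), bb (m+1) q (k+1) * f (k+2)
      = (1-q) * (bb' (m+1) q (k+1) * f (k+2)) + q * (bb' (m+1) q k * f (k+2)) := by
    intro k hk
    rw [pascal m q k (Finset.mem_range.mp hk)]
    ring
  rw [main, hb0, Finset.sum_congr rfl step, Finset.sum_add_distrib, ← Finset.mul_sum,
    ← Finset.mul_sum, dist, shift]
  ring

lemma main_bound {n : ℕ} (hn : 1 ≤ n) {q : ℝ} (hq0 : 0 < q) (hq1 : q ≤ 1) (A : Set ℕ) :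
    |∑ k ∈ range (n+1), bb n q k * ind A k - FFA ((n:ℝ)*q) A| ≤ q := by
  obtain ⟨m, rfl⟩ : ∃ m, n = m + 1 := ⟨n - 1, by omega⟩
  obtain ⟨lam, hlamdef, hlam⟩ : ∃ lam : ℝ, lam = ((m+1 : ℕ):ℝ) * q ∧ 0 < lam :=
    ⟨_, rfl, by push_cast; positivity⟩
  rw [← hlamdef]
  set f : ℕ → ℝ := fA lam A with hf
  have TA : ∑ k ∈ range (m+2), bb (m+1) q k * (lam * f (k+1) - k * f k)
      = (∑ k ∈ range (m+2), bb (m+1) q k * ind A k) - FFA lam A := by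
    have e : ∀ k ∈ range (m+2), bb (m+1) q k * (lam * f (k+1) - k * f k)
        = bb (m+1) q k * ind A k - bb (m+1) q k * FFA lam A := by
      intro k _
      rw [hf, Stein_f hlam A k]
      ring
    rw [Finset.sum_congr rfl e, Finset.sum_sub_distrib, ← Finset.sum_mul, sum_bb, one_mul]
  have TB : ∑ k ∈ range (m+2), bb (m+1) q k * (lam * f (k+1) - k * f k)
      = ∑ j ∈ range (m+1), (lam * q) * (bb' (m+1) q j * (f (j+2) - f (j+1))) := by
    have e : ∀ k ∈ range (m+2), bb (m+1) q k * (lam * f (k+1) - k * f k)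
        = lam * (bb (m+1) q k * f (k+1)) - (k:ℝ) * bb (m+1) q k * f k := by
      intro k _; ring
    rw [Finset.sum_congr rfl e, Finset.sum_sub_distrib, ← Finset.mul_sum, E2 m q f, E1 m q f,
      ← hlamdef, Finset.mul_sum, Finset.mul_sum, ← Finset.sum_sub_distrib]
    exact Finset.sum_congr rfl (fun j _ => by ring)
  rw [← TA, TB]
  have hbound : ∀ j ∈ range (m+1),
      |(lam * q) * (bb' (m+1) q j * (f (j+2) - f (j+1)))| ≤ (lam * q) * (bb' (m+1) q j * (1/lam)) := by
    intro j _
    rw [abs_mul, abs_mul, abs_mul, abs_of_nonneg hlam.le, abs_of_nonneg hq0.le,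
      abs_of_nonneg (bb'_nonneg (le_of_lt hq0) hq1 (m+1) j)]
    have h1 : |f (j+2) - f (j+1)| ≤ 1/lam := by rw [hf]; exact deltaf_abs hlam A j
    have h2 : 0 ≤ bb' (m+1) q j := bb'_nonneg (le_of_lt hq0) hq1 (m+1) j
    have h3 : 0 ≤ lam * q := le_of_lt (mul_pos hlam hq0)
    exact mul_le_mul_of_nonneg_left (mul_le_mul_of_nonneg_left h1 h2) h3
  calc |∑ j ∈ range (m+1), (lam * q) * (bb' (m+1) q j * (f (j+2) - f (j+1)))|
      ≤ ∑ j ∈ range (m+1), |(lam * q) * (bb' (m+1) q j * (f (j+2) - f (j+1)))| :=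
        Finset.abs_sum_le_sum_abs _ _
    _ ≤ ∑ j ∈ range (m+1), (lam * q) * (bb' (m+1) q j * (1/lam)) :=
        Finset.sum_le_sum hbound
    _ = q := by
        have e : ∀ j ∈ range (m+1), (lam * q) * (bb' (m+1) q j * (1/lam))
            = q * bb' (m+1) q j := by
          intro j _
          field_simp
        rw [Finset.sum_congr rfl e, ← Finset.mul_sum, sum_bb', mul_one]

end BPTV

namespace BPTV

lemma binom_toReal (n : ℕ) (p : ℝ≥0) (hp : p ≤ 1) (hp1 : p ≤ 1) (A : Set ℕ) :
    ((Measure.map (Fin.val) ((PMF.binomial p hp n).toMeasure)) A).toReal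
      = ∑ k ∈ range (n+1), bb n (p:ℝ) k * ind A k := by
  rw [Measure.map_apply (measurable_of_countable _) MeasurableSet.of_discrete,
    PMF.toMeasure_apply (hs := MeasurableSet.of_discrete), tsum_fintype]
  have hfin : ∀ x ∈ Finset.univ (α := Fin (n+1)),
      (Fin.val ⁻¹' A).indicator (⇑(PMF.binomial p hp n)) x ≠ ⊤ := by
    intro x _
    rw [Set.indicator_apply]
    split
    · exact PMF.apply_ne_top _ _
    · exact ENNReal.zero_ne_top
  rw [ENNReal.toReal_sum hfin]
  have e : ∀ x : Fin (n+1),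
      ((Fin.val ⁻¹' A).indicator (⇑(PMF.binomial p hp n)) x).toReal
        = bb n (p:ℝ) (x:ℕ) * ind A (x:ℕ) := by
    intro x
    rw [Set.indicator_apply, ind]
    by_cases hx : (x:ℕ) ∈ A
    · rw [if_pos (by exact hx : x ∈ Fin.val ⁻¹' A), if_pos hx, mul_one,
        PMF.binomial_apply]
      have hsub : ((Fin.last n : Fin (n+1)) : ℕ) - (x:ℕ) = n - (x:ℕ) := by
        rw [Fin.val_last]
      rw [hsub, ENNReal.toReal_mul, ENNReal.toReal_mul, ENNReal.toReal_pow,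
        ENNReal.toReal_pow, ENNReal.coe_toReal]
      have h1 : ((1:ENNReal) - (p:ENNReal)).toReal = 1 - (p:ℝ) := by
        rw [← ENNReal.coe_one, ← ENNReal.coe_sub, ENNReal.coe_toReal, NNReal.coe_sub hp1]
        simp
      rw [h1, bb]
      simp
    · rw [if_neg (by exact hx : ¬ x ∈ Fin.val ⁻¹' A), if_neg hx, mul_zero, ENNReal.toReal_zero]
  rw [Finset.sum_congr rfl (fun x _ => e x),
    Fin.sum_univ_eq_sum_range (fun k => bb n (p:ℝ) k * ind A k) (n+1)]

lemma pois_toReal (r : ℝ≥0) (A : Set ℕ) :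
    ((poissonMeasure r) A).toReal = FFA (r:ℝ) A := by
  rw [poissonMeasure, Measure.sum_apply _ MeasurableSet.of_discrete,
    ENNReal.tsum_toReal_eq ?fin, FFA]
  case fin =>
    intro j
    rw [Measure.smul_apply, Measure.dirac_apply' _ MeasurableSet.of_discrete, Set.indicator_apply]
    split <;> simp
  refine tsum_congr (fun j => ?_)
  rw [Measure.smul_apply, Measure.dirac_apply' _ MeasurableSet.of_discrete, Set.indicator_apply, ind]
  by_cases hj : j ∈ A
  · rw [if_pos hj, if_pos hj, one_mul, smul_eq_mul, Pi.one_apply, mul_one,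
      ENNReal.toReal_ofReal (by positivity)]
    rfl
  · rw [if_neg hj, if_neg hj, zero_mul, smul_zero, ENNReal.toReal_zero]

lemma sum_bb_zero (n : ℕ) (A : Set ℕ) :
    ∑ k ∈ range (n+1), bb n 0 k * ind A k = ind A 0 := by
  rw [Finset.sum_eq_single 0]
  · simp [bb]
  · intro k _ hk0
    simp [bb, zero_pow hk0]
  · intro hmem
    exact absurd (Finset.mem_range.mpr (Nat.succ_pos n)) hmem

lemma FFA_zero (A : Set ℕ) : FFA 0 A = ind A 0 := by
  rw [FFA, tsum_eq_single 0]
  · simp [pois]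
  · intro j hj
    simp [pois, zero_pow hj]

end BPTV


open BPTV in
/-- For every integer `n ≥ 1` and every `p ∈ [0, 1]`, the total variation distance between
the binomial distribution `Bin(n, p)` (as a measure on `ℕ`) and the Poisson distribution
with parameter `np` is at most `2p`:
`sup_{A ⊆ ℕ} |Bin(n,p)(A) − Poisson(np)(A)| ≤ 2p`. -/
theorem tv_binomial_poisson_le {n : ℕ} (hn : 1 ≤ n) (p : NNReal) (hp : p ≤ 1) (A : Set ℕ) :
    |((Measure.map (Fin.val)
        ((PMF.binomial p (by exact_mod_cast hp) n).toMeasure)) A).toReal -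
      ((poissonMeasure ((n : NNReal) * p)) A).toReal| ≤ 2 * (p : ℝ) := by
  rw [binom_toReal n p (by exact_mod_cast hp) hp A, pois_toReal ((n : NNReal) * p) A]
  have hcast : (((n:ℝ≥0) * p : ℝ≥0) : ℝ) = (n:ℝ) * (p:ℝ) := by push_cast; ring
  rw [hcast]
  rcases eq_or_ne p 0 with rfl | hne
  · rw [NNReal.coe_zero, mul_zero, sum_bb_zero, FFA_zero, sub_self, abs_zero]
    norm_num
  · have hq0 : 0 < (p:ℝ) := by
      have : 0 < p := lt_of_le_of_ne zero_le (Ne.symm hne)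
      exact_mod_cast this
    have hb := main_bound hn hq0 (by exact_mod_cast hp) A
    have h2 : (p:ℝ) ≤ 2 * (p:ℝ) := by linarith
    exact le_trans hb h2
end

section
/- Let m ≥ 1 and c ≥ 1 be integers, and for j ∈ {1, …, m} let Z_j be independent binomial random variables, Z_j ∼ Bin(M_j, p_j) with M_j ∈ ℕ, p_j ∈ [0, 1]. Set λ_j = M_j p_j, Λ = Σ_{j=1}^{m} λ_j, and S = Z_1 + … + Z_m, and assume Λ > 0. Then for every l ∈ {1, …, m}, | E[Z_l · 1_{S ≤ c} + c (Z_l / S) 1_{S > c}] − (λ_l / Λ)(c − Σ_{h=0}^{c} (c−h) Λ^h e^{−Λ} / h!) | ≤ 2c · Σ_{j=1}^{m} M_j p_j². -/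
open MeasureTheory ProbabilityTheory

set_option maxHeartbeats 1000000
namespace CouponAux

noncomputable def poi (lam : ℝ) (k : ℕ) : ℝ := Real.exp (-lam) * lam ^ k / k.factorial

noncomputable def binR (M : ℕ) (p : ℝ) (k : ℕ) : ℝ :=
  (M.choose k : ℝ) * p ^ k * (1 - p) ^ (M - k)

def convS (a b : ℕ → ℝ) (n : ℕ) : ℝ := ∑ k ∈ Finset.range (n + 1), a k * b (n - k)

lemma poi_nonneg {lam : ℝ} (h : 0 ≤ lam) (k : ℕ) : 0 ≤ poi lam k := by
  unfold poi; positivity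

lemma poi_eq (lam : ℝ) (k : ℕ) : poi lam k = Real.exp (-lam) * (lam ^ k / k.factorial) := by
  rw [poi, mul_div_assoc]

lemma summable_poi (lam : ℝ) : Summable (poi lam) := by
  have := (Real.summable_pow_div_factorial lam).mul_left (Real.exp (-lam))
  apply this.congr
  intro k
  rw [poi_eq]

lemma tsum_poi (lam : ℝ) : ∑' k, poi lam k = 1 := by
  have h1 : ∑' k : ℕ, lam ^ k / k.factorial = Real.exp lam := by
    rw [Real.exp_eq_exp_ℝ, NormedSpace.exp_eq_tsum_div]
  simp only [poi_eq]
  rw [tsum_mul_left, h1, ← Real.exp_add]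
  simp

lemma binR_nonneg {p : ℝ} (h0 : 0 ≤ p) (h1 : p ≤ 1) (M k : ℕ) : 0 ≤ binR M p k := by
  unfold binR
  have : 0 ≤ 1 - p := by linarith
  positivity

lemma binR_zero_of_lt {M k : ℕ} (h : M < k) (p : ℝ) : binR M p k = 0 := by
  unfold binR
  rw [Nat.choose_eq_zero_of_lt h]
  simp

lemma summable_binR (M : ℕ) (p : ℝ) : Summable (binR M p) := by
  apply summable_of_ne_finset_zero (s := Finset.range (M + 1))
  intro k hk
  exact binR_zero_of_lt (by simpa using hk) p

lemma tsum_binR (M : ℕ) (p : ℝ) : ∑' k, binR M p k = 1 := by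
  rw [tsum_eq_sum (s := Finset.range (M + 1))
    (fun k hk => binR_zero_of_lt (by simpa using hk) p)]
  have h := add_pow p (1 - p) M
  simp only [add_sub_cancel, one_pow] at h
  rw [h]
  apply Finset.sum_congr rfl
  intro k hk
  unfold binR
  ring




section master
variable {a b : ℕ → ℝ} {f : ℕ → ℝ} {C : ℝ}

lemma master (ha0 : ∀ k, 0 ≤ a k) (hb0 : ∀ k, 0 ≤ b k)
    (ha : Summable a) (hb : Summable b)
    (hf0 : ∀ n, 0 ≤ f n) (hfC : ∀ n, f n ≤ C) :
    Summable (fun n => convS a b n * f n) ∧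
      ∑' n, convS a b n * f n = ∑' (k : ℕ), ∑' (t : ℕ), a k * b t * f (k + t) := by
  set F : ℕ × ℕ → ℝ := fun kt => a kt.1 * b kt.2 * f (kt.1 + kt.2) with hF
  have hab : Summable fun kt : ℕ × ℕ => a kt.1 * b kt.2 :=
    ha.mul_of_nonneg hb ha0 hb0
  have hFnn : ∀ kt, 0 ≤ F kt := fun kt => by
    have := mul_nonneg (mul_nonneg (ha0 kt.1) (hb0 kt.2)) (hf0 (kt.1 + kt.2))
    simpa [hF] using this
  have hFs : Summable F :=
    Summable.of_nonneg_of_le hFnn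
      (fun kt => mul_le_mul_of_nonneg_left (hfC _) (mul_nonneg (ha0 kt.1) (hb0 kt.2)))
      (hab.mul_right C)
  have hG : Summable (fun c : (n : ℕ) × {x // x ∈ Finset.HasAntidiagonal.antidiagonal n} =>
      F (Finset.HasAntidiagonal.sigmaAntidiagonalEquivProd c)) :=
    (Equiv.summable_iff _).2 hFs
  have key : ∀ n : ℕ, ∑' (c : {x // x ∈ Finset.HasAntidiagonal.antidiagonal n}), F c.1 = convS a b n * f n := by
    intro n
    rw [Finset.tsum_subtype (Finset.HasAntidiagonal.antidiagonal n) F,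
      Finset.Nat.sum_antidiagonal_eq_sum_range_succ_mk]
    rw [convS, Finset.sum_mul]
    apply Finset.sum_congr rfl
    intro k hk
    have hk' : k ≤ n := by simpa [Nat.lt_succ_iff] using hk
    simp [hF, Nat.add_sub_cancel' hk']
  constructor
  · have hs := hG.sigma
    apply hs.congr
    intro n
    rw [← key n]
    rfl
  · have h1 : ∑' kt : ℕ × ℕ, F kt = ∑' (k : ℕ) (t : ℕ), F (k, t) := by
      apply Summable.tsum_prod' hFs
      intro k
      refine Summable.of_nonneg_of_le (fun t => hFnn (k, t)) (fun t => ?_) (hb.mul_left (a k * C))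
      calc a k * b t * f (k+t) ≤ a k * b t * C :=
            mul_le_mul_of_nonneg_left (hfC _) (mul_nonneg (ha0 k) (hb0 t))
        _ = a k * C * b t := by ring
    have h2 : ∑' kt : ℕ × ℕ, F kt = ∑' n, convS a b n * f n := by
      rw [← (Finset.HasAntidiagonal.sigmaAntidiagonalEquivProd (A := ℕ)).tsum_eq F, Summable.tsum_sigma hG]
      refine tsum_congr (fun n => ?_)
      rw [← key n]
      rfl
    rw [← h2, h1]

lemma conv_summable (ha0 : ∀ k, 0 ≤ a k) (hb0 : ∀ k, 0 ≤ b k)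
    (ha : Summable a) (hb : Summable b) : Summable (convS a b) := by
  have := (master ha0 hb0 ha hb (f := fun _ => (1:ℝ)) (C := 1)
    (fun _ => zero_le_one) (fun _ => le_refl 1)).1
  simpa using this

lemma conv_tsum (ha0 : ∀ k, 0 ≤ a k) (hb0 : ∀ k, 0 ≤ b k)
    (ha : Summable a) (hb : Summable b) :
    ∑' n, convS a b n = (∑' k, a k) * (∑' t, b t) := by
  have := (master ha0 hb0 ha hb (f := fun _ => (1:ℝ)) (C := 1)
    (fun _ => zero_le_one) (fun _ => le_refl 1)).2
  simp only [mul_one] at this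
  rw [this]
  have : ∀ k : ℕ, ∑' t, a k * b t = a k * ∑' t, b t := fun k => tsum_mul_left
  calc ∑' (k : ℕ) (t : ℕ), a k * b t = ∑' k, a k * ∑' t, b t := tsum_congr this
    _ = (∑' k, a k) * ∑' t, b t := tsum_mul_right

end master



section lecam

lemma convS_sub_left (a a' b : ℕ → ℝ) (n : ℕ) :
    convS (fun k => a k - a' k) b n = convS a b n - convS a' b n := by
  simp [convS, sub_mul, Finset.sum_sub_distrib]

lemma convS_sub_right (a b b' : ℕ → ℝ) (n : ℕ) :
    convS a (fun k => b k - b' k) n = convS a b n - convS a b' n := by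
  simp [convS, mul_sub, Finset.sum_sub_distrib]

lemma convS_abs_le (d e : ℕ → ℝ) (n : ℕ) :
    |convS d e n| ≤ convS (fun k => |d k|) (fun k => |e k|) n := by
  refine (Finset.abs_sum_le_sum_abs _ _).trans ?_
  apply Finset.sum_le_sum
  intro k _
  rw [abs_mul]

lemma conv_abs_summable {d e : ℕ → ℝ} (hd : Summable fun k => |d k|)
    (he : Summable fun k => |e k|) : Summable fun n => |convS d e n| := by
  have h1 : Summable (convS (fun k => |d k|) fun k => |e k|) :=
    conv_summable (fun k => abs_nonneg _) (fun k => abs_nonneg _) hd he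
  exact Summable.of_nonneg_of_le (fun n => abs_nonneg _) (convS_abs_le d e) h1

lemma CA {d e : ℕ → ℝ} (hd : Summable fun k => |d k|) (he : Summable fun k => |e k|) :
    ∑' n, |convS d e n| ≤ (∑' k, |d k|) * (∑' k, |e k|) := by
  have h1 : Summable (convS (fun k => |d k|) fun k => |e k|) :=
    conv_summable (fun k => abs_nonneg _) (fun k => abs_nonneg _) hd he
  have h2 := conv_tsum (fun k : ℕ => abs_nonneg (d k)) (fun k => abs_nonneg (e k)) hd he
  calc ∑' n, |convS d e n| ≤ ∑' n, convS (fun k => |d k|) (fun k => |e k|) n :=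
        Summable.tsum_le_tsum (convS_abs_le d e) (conv_abs_summable hd he) h1
    _ = _ := h2

lemma poi_conv (l1 l2 : ℝ) (n : ℕ) : convS (poi l1) (poi l2) n = poi (l1 + l2) n := by
  unfold convS poi
  rw [add_pow l1 l2 n, neg_add, Real.exp_add, Finset.mul_sum, Finset.sum_div]
  apply Finset.sum_congr rfl
  intro k hk
  have hk' : k ≤ n := by simpa [Nat.lt_succ_iff] using hk
  have hch : (n.choose k : ℝ) = n.factorial / (k.factorial * (n - k).factorial) :=
    Nat.cast_choose ℝ hk'
  have h1 : (k.factorial : ℝ) ≠ 0 := Nat.cast_ne_zero.mpr (Nat.factorial_ne_zero _)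
  have h2 : ((n - k).factorial : ℝ) ≠ 0 := Nat.cast_ne_zero.mpr (Nat.factorial_ne_zero _)
  have h3 : (n.factorial : ℝ) ≠ 0 := Nat.cast_ne_zero.mpr (Nat.factorial_ne_zero _)
  rw [hch]
  field_simp

lemma binR_one_zero (p : ℝ) : binR 1 p 0 = 1 - p := by simp [binR]

lemma binR_one_one (p : ℝ) : binR 1 p 1 = p := by simp [binR]

lemma convS_zero (a b : ℕ → ℝ) : convS a b 0 = a 0 * b 0 := by simp [convS]

lemma conv_bin1 (p : ℝ) (b : ℕ → ℝ) (n : ℕ) :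
    convS (binR 1 p) b (n + 1) = (1 - p) * b (n + 1) + p * b n := by
  rw [convS, Finset.sum_range_succ']
  have : ∀ i, binR 1 p (i + 1) * b (n + 1 - (i + 1)) = (fun i => binR 1 p (i+1) * b (n - i)) i := by
    intro i; simp [Nat.succ_sub_succ]
  rw [Finset.sum_congr rfl (fun i _ => this i), Finset.sum_range_succ']
  have hz : ∀ i, binR 1 p (i + 1 + 1) * b (n - (i + 1)) = 0 := by
    intro i
    rw [binR_zero_of_lt (by omega)]
    ring
  rw [Finset.sum_congr rfl (fun i _ => hz i)]
  simp [binR_one_zero, binR_one_one]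
  ring

lemma binR_succ (M : ℕ) (p : ℝ) (n : ℕ) :
    binR (M + 1) p n = convS (binR 1 p) (binR M p) n := by
  cases n with
  | zero =>
    rw [convS_zero, binR_one_zero]
    simp [binR, pow_succ]
    ring
  | succ n =>
    rw [conv_bin1]
    rcases lt_trichotomy n M with h | h | h
    · have e1 : M + 1 - (n + 1) = M - n := by omega
      have e2 : M - n = (M - (n + 1)) + 1 := by omega
      unfold binR
      rw [Nat.choose_succ_succ, e1, e2, pow_succ]
      push_cast
      ring
    · subst h
      unfold binR
      have e3 : n - (n + 1) = 0 := by omega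
      simp [Nat.choose_self, Nat.choose_eq_zero_of_lt (Nat.lt_succ_self n), e3,
        Nat.sub_self, Nat.succ_sub_succ]
      ring
    · rw [binR_zero_of_lt (by omega), binR_zero_of_lt (by omega),
        binR_zero_of_lt (by omega)]
      ring

lemma berpoi {p : ℝ} (h0 : 0 ≤ p) (h1 : p ≤ 1) :
    ∑' k, |binR 1 p k - poi p k| ≤ 2 * p ^ 2 := by
  have hsum : Summable (fun k => |binR 1 p k - poi p k|) :=
    ((summable_binR 1 p).sub (summable_poi p)).abs
  rw [Summable.tsum_eq_zero_add hsum, Summable.tsum_eq_zero_add ((summable_nat_add_iff 1).2 hsum)]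
  have h2 : ∀ k : ℕ, |binR 1 p (k + 1 + 1) - poi p (k + 1 + 1)| = poi p (k + 2) := by
    intro k
    rw [binR_zero_of_lt (by omega), zero_sub, abs_neg, abs_of_nonneg (poi_nonneg h0 _)]
  rw [tsum_congr h2]
  have tail : ∑' k : ℕ, poi p (k + 2) = 1 - poi p 0 - poi p 1 := by
    have h := tsum_poi p
    rw [Summable.tsum_eq_zero_add (summable_poi p),
      Summable.tsum_eq_zero_add ((summable_nat_add_iff 1).2 (summable_poi p))] at h
    have : ∀ k : ℕ, poi p (k + 1 + 1) = poi p (k + 2) := fun k => rfl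
    rw [tsum_congr this] at h
    linarith
  rw [tail]
  have e0 : poi p 0 = Real.exp (-p) := by simp [poi]
  have e1 : poi p 1 = Real.exp (-p) * p := by simp [poi]
  have hexp1 : 1 - p ≤ Real.exp (-p) := by
    have := Real.add_one_le_exp (-p); linarith
  have hexp2 : Real.exp (-p) ≤ 1 := Real.exp_le_one_iff.mpr (by linarith)
  have a0 : |binR 1 p 0 - poi p 0| = Real.exp (-p) - (1 - p) := by
    rw [binR_one_zero, e0, abs_of_nonpos (by linarith), neg_sub]
  have a1 : |binR 1 p 1 - poi p 1| = p - Real.exp (-p) * p := by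
    rw [binR_one_one, e1, abs_of_nonneg (by nlinarith)]
  rw [a0, a1, e0, e1]
  nlinarith [Real.add_one_le_exp (-p), sq_nonneg p, mul_nonneg h0 (sub_nonneg.mpr hexp2)]

lemma abs_binR_eq {p : ℝ} (h0 : 0 ≤ p) (h1 : p ≤ 1) (M : ℕ) :
    ∀ k, |binR M p k| = binR M p k := fun k => abs_of_nonneg (binR_nonneg h0 h1 M k)

lemma lecam (M : ℕ) {p : ℝ} (h0 : 0 ≤ p) (h1 : p ≤ 1) :
    ∑' k, |binR M p k - poi (M * p) k| ≤ 2 * M * p ^ 2 := by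
  induction M with
  | zero =>
    have : ∀ k : ℕ, |binR 0 p k - poi ((0 : ℕ) * p) k| = 0 := by
      intro k
      have hz : ((0 : ℕ) : ℝ) * p = 0 := by simp
      rw [hz]
      cases k with
      | zero => simp [binR, poi]
      | succ k => simp [binR, poi, Nat.choose, zero_pow]
    rw [tsum_congr this]
    simp
  | succ M ih =>
    have key : ∀ n, binR (M + 1) p n - poi (((M + 1 : ℕ) : ℝ) * p) n =
        convS (fun k => binR 1 p k - poi p k) (binR M p) n +
        convS (poi p) (fun k => binR M p k - poi (M * p) k) n := by
      intro n
      rw [convS_sub_left, convS_sub_right, ← binR_succ]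
      have : poi (((M + 1 : ℕ) : ℝ) * p) n = convS (poi p) (poi (M * p)) n := by
        rw [poi_conv]
        congr 1
        push_cast
        ring
      rw [this]
      ring
    have habs1 : Summable fun k => |binR 1 p k - poi p k| :=
      ((summable_binR 1 p).sub (summable_poi p)).abs
    have habs2 : Summable fun k => |binR M p k - poi (M * p) k| :=
      ((summable_binR M p).sub (summable_poi (M * p))).abs
    have habsb : Summable fun k => |binR M p k| := (summable_binR M p).abs
    have habsp : Summable fun k => |poi p k| := (summable_poi p).abs
    have s1 : Summable fun n => |convS (fun k => binR 1 p k - poi p k) (binR M p) n| :=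
      conv_abs_summable habs1 habsb
    have s2 : Summable fun n => |convS (poi p) (fun k => binR M p k - poi (M * p) k) n| :=
      conv_abs_summable habsp habs2
    calc ∑' n, |binR (M + 1) p n - poi (((M + 1 : ℕ) : ℝ) * p) n|
        ≤ ∑' n, (|convS (fun k => binR 1 p k - poi p k) (binR M p) n| +
            |convS (poi p) (fun k => binR M p k - poi (M * p) k) n|) := by
          apply Summable.tsum_le_tsum _ _ (s1.add s2)
          · intro n
            rw [key n]
            exact abs_add_le _ _
          · apply Summable.of_nonneg_of_le (fun n => abs_nonneg _) _ (s1.add s2)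
            intro n
            rw [key n]
            exact abs_add_le _ _
      _ = (∑' n, |convS (fun k => binR 1 p k - poi p k) (binR M p) n|) +
          ∑' n, |convS (poi p) (fun k => binR M p k - poi (M * p) k) n| := Summable.tsum_add s1 s2
      _ ≤ (∑' k, |binR 1 p k - poi p k|) * (∑' k, |binR M p k|) +
          (∑' k, |poi p k|) * ∑' k, |binR M p k - poi (M * p) k| :=
          add_le_add (CA habs1 habsb) (CA habsp habs2)
      _ ≤ 2 * p ^ 2 * 1 + 1 * (2 * M * p ^ 2) := by
          have hb1 : (∑' k, |binR M p k|) = 1 := by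
            rw [tsum_congr (abs_binR_eq h0 h1 M), tsum_binR]
          have hp1 : (∑' k, |poi p k|) = 1 := by
            rw [tsum_congr (fun k => abs_of_nonneg (poi_nonneg h0 k)), tsum_poi]
          rw [hb1, hp1]
          have hd1 : 0 ≤ ∑' k, |binR 1 p k - poi p k| := tsum_nonneg (fun k => abs_nonneg _)
          have hd2 : 0 ≤ ∑' k, |binR M p k - poi (M * p) k| := tsum_nonneg (fun k => abs_nonneg _)
          have := berpoi h0 h1
          nlinarith [ih]
      _ = 2 * ((M + 1 : ℕ) : ℝ) * p ^ 2 := by push_cast; ring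

end lecam


section poisson1d

lemma poi_succ_mul (lam : ℝ) (k : ℕ) :
    poi lam (k + 1) * ((k : ℝ) + 1) = lam * poi lam k := by
  unfold poi
  rw [Nat.factorial_succ, pow_succ]
  have h1 : (k.factorial : ℝ) ≠ 0 := Nat.cast_ne_zero.mpr (Nat.factorial_ne_zero _)
  have h2 : ((k : ℝ) + 1) ≠ 0 := by positivity
  push_cast
  field_simp

lemma summable_poi_shift {lam : ℝ} {u : ℕ → ℝ} {C : ℝ} (hl : 0 ≤ lam)
    (hu0 : ∀ k, 0 ≤ u k) (huC : ∀ k, u k ≤ C) :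
    Summable (fun k => poi lam k * u k) := by
  refine Summable.of_nonneg_of_le (fun k => mul_nonneg (poi_nonneg hl k) (hu0 k))
    (fun k => mul_le_mul_of_nonneg_left (huC k) (poi_nonneg hl k))
    ((summable_poi lam).mul_right C)

lemma SB1 {lam : ℝ} (hl : 0 ≤ lam) {u : ℕ → ℝ} {C : ℝ}
    (hu0 : ∀ k, 0 ≤ u k) (huC : ∀ k, u k ≤ C) :
    ∑' k : ℕ, poi lam k * ((k : ℝ) * u k) = lam * ∑' k : ℕ, poi lam k * u (k + 1) := by
  have hs : Summable (fun k => poi lam k * u (k + 1)) :=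
    summable_poi_shift hl (fun k => hu0 (k + 1)) (fun k => huC (k + 1))
  have key : ∀ k : ℕ, poi lam (k + 1) * (((k + 1 : ℕ) : ℝ) * u (k + 1)) =
      lam * (poi lam k * u (k + 1)) := by
    intro k
    have h := poi_succ_mul lam k
    push_cast
    calc poi lam (k + 1) * (((k:ℝ) + 1) * u (k + 1))
        = (poi lam (k + 1) * ((k:ℝ) + 1)) * u (k + 1) := by ring
      _ = (lam * poi lam k) * u (k + 1) := by rw [h]
      _ = lam * (poi lam k * u (k + 1)) := by ring
  have hf : Summable (fun k => poi lam k * ((k : ℝ) * u k)) := by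
    apply (summable_nat_add_iff 1).1
    apply (hs.mul_left lam).congr
    intro k
    exact (key k).symm
  rw [Summable.tsum_eq_zero_add hf]
  simp only [Nat.cast_zero, zero_mul, mul_zero, zero_add]
  rw [tsum_congr key, tsum_mul_left]

lemma emin (c : ℕ) {lam : ℝ} (hl : 0 ≤ lam) :
    ∑' k : ℕ, poi lam k * ((min k c : ℕ) : ℝ) =
      (c : ℝ) - ∑ h ∈ Finset.range (c + 1), ((c : ℝ) - (h : ℝ)) * poi lam h := by
  have h1 : Summable (fun k => poi lam k * (c : ℝ)) := (summable_poi lam).mul_right _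
  have h2 : Summable (fun k => poi lam k * ((c - min k c : ℕ) : ℝ)) := by
    apply summable_of_ne_finset_zero (s := Finset.range (c + 1))
    intro k hk
    have hck : c ≤ k := by
      have := Finset.mem_range.not.mp hk
      omega
    rw [min_eq_right hck, Nat.sub_self]
    simp
  have key : ∀ k : ℕ, poi lam k * ((min k c : ℕ) : ℝ) =
      poi lam k * (c : ℝ) - poi lam k * ((c - min k c : ℕ) : ℝ) := by
    intro k
    rw [← mul_sub]
    congr 1
    have hmin : min k c ≤ c := min_le_right _ _
    push_cast [Nat.cast_sub hmin]
    ring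
  rw [tsum_congr key, Summable.tsum_sub h1 h2, tsum_mul_right, tsum_poi, one_mul]
  congr 1
  rw [tsum_eq_sum (s := Finset.range (c + 1))]
  · apply Finset.sum_congr rfl
    intro h hh
    have hh' : h ≤ c := by simpa [Nat.lt_succ_iff] using hh
    rw [min_eq_left hh', Nat.cast_sub hh']
    ring
  · intro k hk
    have hck : c ≤ k := by
      have := Finset.mem_range.not.mp hk
      omega
    rw [min_eq_right hck, Nat.sub_self]
    simp

end poisson1d


section multi

lemma tsum_prod_eq {α β : Type*} (F : α → β → ℝ)
    (hS : Summable fun p : α × β => F p.1 p.2) (hfib : ∀ a, Summable (F a)) :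
    ∑' p : α × β, F p.1 p.2 = ∑' a, ∑' b, F a b := by
  rw [Summable.tsum_prod' hS (fun a => (hfib a).congr (fun b => rfl))]

noncomputable def PP {n : ℕ} (a : Fin n → ℕ → ℝ) : (Fin n → ℕ) → ℝ := fun x => ∏ j, a j (x j)

lemma PP_nonneg {n : ℕ} {a : Fin n → ℕ → ℝ} (ha0 : ∀ j k, 0 ≤ a j k) (x : Fin n → ℕ) :
    0 ≤ PP a x := Finset.prod_nonneg (fun j _ => ha0 j (x j))

lemma PP_cons {n : ℕ} (a : Fin (n + 1) → ℕ → ℝ) (k : ℕ) (y : Fin n → ℕ) :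
    PP a (Fin.cons k y) = a 0 k * PP (fun j => a j.succ) y := by
  unfold PP
  rw [Fin.prod_univ_succ]
  simp

lemma PP_summable_tsum {n : ℕ} (a : Fin n → ℕ → ℝ) (ha0 : ∀ j k, 0 ≤ a j k)
    (has : ∀ j, Summable (a j)) :
    Summable (PP a) ∧ ∑' x, PP a x = ∏ j, ∑' k, a j k := by
  induction n with
  | zero =>
    refine ⟨Summable.of_finite, ?_⟩
    rw [tsum_eq_single default (fun b hb => absurd (Subsingleton.elim b default) hb)]
    simp [PP]
  | succ n ih =>
    obtain ⟨ihs, iht⟩ := ih (fun j => a j.succ) (fun j k => ha0 j.succ k) (fun j => has j.succ)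
    have hcomp : ∀ ky : ℕ × (Fin n → ℕ),
        PP a ((Fin.consEquiv fun _ => ℕ) ky) = a 0 ky.1 * PP (fun j => a j.succ) ky.2 := by
      rintro ⟨k, y⟩
      exact PP_cons a k y
    have hprod : Summable (fun ky : ℕ × (Fin n → ℕ) => a 0 ky.1 * PP (fun j => a j.succ) ky.2) :=
      (has 0).mul_of_nonneg ihs (fun k => ha0 0 k) (fun y => PP_nonneg (fun j k => ha0 j.succ k) y)
    have hsum : Summable (PP a) := by
      rw [← Equiv.summable_iff (Fin.consEquiv fun _ => ℕ)]
      exact hprod.congr (fun ky => (hcomp ky).symm)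
    refine ⟨hsum, ?_⟩
    have e1 : ∑' x, PP a x = ∑' ky : ℕ × (Fin n → ℕ), a 0 ky.1 * PP (fun j => a j.succ) ky.2 := by
      rw [← Equiv.tsum_eq (Fin.consEquiv fun _ => ℕ) (PP a)]
      exact tsum_congr hcomp
    have e2 : ∑' ky : ℕ × (Fin n → ℕ), a 0 ky.1 * PP (fun j => a j.succ) ky.2
        = ∑' k, ∑' y : Fin n → ℕ, a 0 k * PP (fun j => a j.succ) y :=
      tsum_prod_eq (fun k y => a 0 k * PP (fun j => a j.succ) y) hprod
        (fun k => ihs.mul_left _)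
    have e3 : ∀ k : ℕ, ∑' y : Fin n → ℕ, a 0 k * PP (fun j => a j.succ) y
        = a 0 k * ∑' y, PP (fun j => a j.succ) y := fun k => tsum_mul_left
    rw [e1, e2, tsum_congr e3, tsum_mul_right, Fin.prod_univ_succ, ← iht]

lemma PP_test_summable {n : ℕ} {a : Fin n → ℕ → ℝ} (ha0 : ∀ j k, 0 ≤ a j k)
    (has : ∀ j, Summable (a j)) {f : (Fin n → ℕ) → ℝ} {C : ℝ}
    (hf0 : ∀ x, 0 ≤ f x) (hfC : ∀ x, f x ≤ C) :
    Summable (fun x => PP a x * f x) := by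
  refine Summable.of_nonneg_of_le
    (fun x => mul_nonneg (PP_nonneg ha0 x) (hf0 x))
    (fun x => mul_le_mul_of_nonneg_left (hfC x) (PP_nonneg ha0 x))
    ((PP_summable_tsum a ha0 has).1.mul_right C)

/-- Fubini: peel off the first coordinate. -/
lemma tsum_PP_cons {n : ℕ} (a : Fin (n + 1) → ℕ → ℝ) (ha0 : ∀ j k, 0 ≤ a j k)
    (has : ∀ j, Summable (a j)) (f : (Fin (n + 1) → ℕ) → ℝ) {C : ℝ}
    (hf0 : ∀ x, 0 ≤ f x) (hfC : ∀ x, f x ≤ C) :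
    ∑' x, PP a x * f x
      = ∑' k : ℕ, a 0 k * ∑' y : Fin n → ℕ, PP (fun j => a j.succ) y * f (Fin.cons k y) := by
  have htail0 : ∀ (j : Fin n) (k : ℕ), 0 ≤ a j.succ k := fun j k => ha0 j.succ k
  have htails : ∀ j : Fin n, Summable (a j.succ) := fun j => has j.succ
  have hS : Summable (fun x => PP a x * f x) := PP_test_summable ha0 has hf0 hfC
  have hcomp : ∀ ky : ℕ × (Fin n → ℕ),
      PP a ((Fin.consEquiv fun _ => ℕ) ky) * f ((Fin.consEquiv fun _ => ℕ) ky)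
        = a 0 ky.1 * (PP (fun j => a j.succ) ky.2 * f (Fin.cons ky.1 ky.2)) := by
    rintro ⟨k, y⟩
    show PP a (Fin.cons k y) * f (Fin.cons k y) = _
    rw [PP_cons]
    ring
  have hprodS : Summable (fun ky : ℕ × (Fin n → ℕ) =>
      a 0 ky.1 * (PP (fun j => a j.succ) ky.2 * f (Fin.cons ky.1 ky.2))) := by
    have := (Equiv.summable_iff (Fin.consEquiv fun _ : Fin (n+1) => ℕ)).2 hS
    exact this.congr hcomp
  have e1 : ∑' x, PP a x * f x = ∑' ky : ℕ × (Fin n → ℕ),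
      a 0 ky.1 * (PP (fun j => a j.succ) ky.2 * f (Fin.cons ky.1 ky.2)) := by
    rw [← Equiv.tsum_eq (Fin.consEquiv fun _ => ℕ) (fun x => PP a x * f x)]
    exact tsum_congr hcomp
  have e2 : ∑' ky : ℕ × (Fin n → ℕ),
      a 0 ky.1 * (PP (fun j => a j.succ) ky.2 * f (Fin.cons ky.1 ky.2))
      = ∑' k, ∑' y : Fin n → ℕ, a 0 k * (PP (fun j => a j.succ) y * f (Fin.cons k y)) :=
    tsum_prod_eq (fun k y => a 0 k * (PP (fun j => a j.succ) y * f (Fin.cons k y))) hprodS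
      (fun k => Summable.mul_left _
        (PP_test_summable htail0 htails (fun y => hf0 _) (fun y => hfC _)))
  have e3 : ∀ k : ℕ, ∑' y : Fin n → ℕ, a 0 k * (PP (fun j => a j.succ) y * f (Fin.cons k y))
      = a 0 k * ∑' y, PP (fun j => a j.succ) y * f (Fin.cons k y) := fun k => tsum_mul_left
  rw [e1, e2, tsum_congr e3]

/-- Telescoping total-variation bound for product measures against a bounded test function. -/
lemma TEL {n : ℕ} (a b : Fin n → ℕ → ℝ)
    (ha0 : ∀ j k, 0 ≤ a j k) (hb0 : ∀ j k, 0 ≤ b j k)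
    (has : ∀ j, Summable (a j)) (hbs : ∀ j, Summable (b j))
    (ha1 : ∀ j, ∑' k, a j k = 1) (hb1 : ∀ j, ∑' k, b j k = 1)
    (f : (Fin n → ℕ) → ℝ) {C : ℝ} (hf0 : ∀ x, 0 ≤ f x) (hfC : ∀ x, f x ≤ C) :
    |∑' x, PP a x * f x - ∑' x, PP b x * f x| ≤ C * ∑ j, ∑' k, |a j k - b j k| := by
  induction n with
  | zero =>
    rw [tsum_eq_single default (fun x hx => absurd (Subsingleton.elim x default) hx),
      tsum_eq_single default (fun x hx => absurd (Subsingleton.elim x default) hx)]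
    simp [PP]
  | succ n ih =>
    have hC0 : 0 ≤ C := le_trans (hf0 default) (hfC default)
    set at' := fun j : Fin n => a j.succ with hat
    set bt := fun j : Fin n => b j.succ with hbt
    have hat0 : ∀ j k, 0 ≤ at' j k := fun j k => ha0 j.succ k
    have hbt0 : ∀ j k, 0 ≤ bt j k := fun j k => hb0 j.succ k
    have hats : ∀ j, Summable (at' j) := fun j => has j.succ
    have hbts : ∀ j, Summable (bt j) := fun j => hbs j.succ
    have hat1 : ∀ j, ∑' k, at' j k = 1 := fun j => ha1 j.succ
    have hbt1 : ∀ j, ∑' k, bt j k = 1 := fun j => hb1 j.succ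
    set u := fun k : ℕ => ∑' y : Fin n → ℕ, PP at' y * f (Fin.cons k y) with hu
    set v := fun k : ℕ => ∑' y : Fin n → ℕ, PP bt y * f (Fin.cons k y) with hv
    have hPPat1 : ∑' y, PP at' y = 1 := by
      rw [(PP_summable_tsum at' hat0 hats).2]
      simp [hat1]
    have hPPbt1 : ∑' y, PP bt y = 1 := by
      rw [(PP_summable_tsum bt hbt0 hbts).2]
      simp [hbt1]
    have hu0 : ∀ k, 0 ≤ u k := fun k =>
      tsum_nonneg (fun y => mul_nonneg (PP_nonneg hat0 y) (hf0 _))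
    have huC : ∀ k, u k ≤ C := by
      intro k
      calc u k ≤ ∑' y, PP at' y * C :=
            Summable.tsum_le_tsum (fun y => mul_le_mul_of_nonneg_left (hfC _) (PP_nonneg hat0 y))
              (PP_test_summable hat0 hats (fun y => hf0 _) (fun y => hfC _))
              (((PP_summable_tsum at' hat0 hats).1).mul_right C)
        _ = C := by rw [tsum_mul_right, hPPat1, one_mul]
    have hv0 : ∀ k, 0 ≤ v k := fun k =>
      tsum_nonneg (fun y => mul_nonneg (PP_nonneg hbt0 y) (hf0 _))
    have hvC : ∀ k, v k ≤ C := by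
      intro k
      calc v k ≤ ∑' y, PP bt y * C :=
            Summable.tsum_le_tsum (fun y => mul_le_mul_of_nonneg_left (hfC _) (PP_nonneg hbt0 y))
              (PP_test_summable hbt0 hbts (fun y => hf0 _) (fun y => hfC _))
              (((PP_summable_tsum bt hbt0 hbts).1).mul_right C)
        _ = C := by rw [tsum_mul_right, hPPbt1, one_mul]
    have huv : ∀ k, |u k - v k| ≤ C * ∑ j, ∑' t, |at' j t - bt j t| := by
      intro k
      exact ih at' bt hat0 hbt0 hats hbts hat1 hbt1 (fun y => f (Fin.cons k y))
        (fun y => hf0 _) (fun y => hfC _)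
    rw [tsum_PP_cons a ha0 has f hf0 hfC, tsum_PP_cons b hb0 hbs f hf0 hfC]
    -- now : |∑' k, a 0 k * u k - ∑' k, b 0 k * v k| ≤ ...
    have hsum_au : Summable (fun k => a 0 k * u k) :=
      Summable.of_nonneg_of_le (fun k => mul_nonneg (ha0 0 k) (hu0 k))
        (fun k => mul_le_mul_of_nonneg_left (huC k) (ha0 0 k)) ((has 0).mul_right C)
    have hsum_bv : Summable (fun k => b 0 k * v k) :=
      Summable.of_nonneg_of_le (fun k => mul_nonneg (hb0 0 k) (hv0 k))
        (fun k => mul_le_mul_of_nonneg_left (hvC k) (hb0 0 k)) ((hbs 0).mul_right C)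
    have hsum_bu : Summable (fun k => b 0 k * u k) :=
      Summable.of_nonneg_of_le (fun k => mul_nonneg (hb0 0 k) (hu0 k))
        (fun k => mul_le_mul_of_nonneg_left (huC k) (hb0 0 k)) ((hbs 0).mul_right C)
    have split : ∑' k, a 0 k * u k - ∑' k, b 0 k * v k
        = (∑' k, (a 0 k - b 0 k) * u k) + ∑' k, b 0 k * (u k - v k) := by
      rw [tsum_congr (fun k => (sub_mul (a 0 k) (b 0 k) (u k))), Summable.tsum_sub hsum_au hsum_bu,
        tsum_congr (fun k => (mul_sub (b 0 k) (u k) (v k))), Summable.tsum_sub hsum_bu hsum_bv]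
      ring
    rw [split]
    have habs0 : Summable (fun k => |a 0 k - b 0 k|) := ((has 0).sub (hbs 0)).abs
    have t1 : |∑' k, (a 0 k - b 0 k) * u k| ≤ C * ∑' k, |a 0 k - b 0 k| := by
      have hs : Summable fun k => (a 0 k - b 0 k) * u k := by
        apply Summable.of_abs
        refine Summable.of_nonneg_of_le (fun k => abs_nonneg _) (fun k => ?_)
          (habs0.mul_right C)
        rw [abs_mul, abs_of_nonneg (hu0 k)]
        exact mul_le_mul_of_nonneg_left (huC k) (abs_nonneg _)
      calc |∑' k, (a 0 k - b 0 k) * u k| ≤ ∑' k, |(a 0 k - b 0 k) * u k| := by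
            simpa only [Real.norm_eq_abs] using norm_tsum_le_tsum_norm (f := fun k => (a 0 k - b 0 k) * u k)
              (by simpa only [Real.norm_eq_abs] using hs.abs)
        _ ≤ ∑' k, |a 0 k - b 0 k| * C := by
            apply Summable.tsum_le_tsum _ hs.abs (habs0.mul_right C)
            intro k
            rw [abs_mul, abs_of_nonneg (hu0 k)]
            exact mul_le_mul_of_nonneg_left (huC k) (abs_nonneg _)
        _ = C * ∑' k, |a 0 k - b 0 k| := by rw [tsum_mul_right]; ring
    have t2 : |∑' k, b 0 k * (u k - v k)| ≤ C * ∑ j, ∑' t, |at' j t - bt j t| := by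
      set D := C * ∑ j, ∑' t, |at' j t - bt j t| with hD
      have hD0 : 0 ≤ D := by
        apply mul_nonneg hC0
        exact Finset.sum_nonneg (fun j _ => tsum_nonneg (fun t => abs_nonneg _))
      have hs : Summable fun k => b 0 k * (u k - v k) := by
        apply Summable.of_abs
        refine Summable.of_nonneg_of_le (fun k => abs_nonneg _) (fun k => ?_)
          ((hbs 0).mul_right D)
        rw [abs_mul, abs_of_nonneg (hb0 0 k)]
        exact mul_le_mul_of_nonneg_left (huv k) (hb0 0 k)
      calc |∑' k, b 0 k * (u k - v k)| ≤ ∑' k, |b 0 k * (u k - v k)| := by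
            simpa only [Real.norm_eq_abs] using norm_tsum_le_tsum_norm (f := fun k => b 0 k * (u k - v k))
              (by simpa only [Real.norm_eq_abs] using hs.abs)
        _ ≤ ∑' k, b 0 k * D := by
            apply Summable.tsum_le_tsum _ hs.abs ((hbs 0).mul_right D)
            intro k
            rw [abs_mul, abs_of_nonneg (hb0 0 k)]
            exact mul_le_mul_of_nonneg_left (huv k) (hb0 0 k)
        _ = D := by rw [tsum_mul_right, hb1 0, one_mul]
    calc |(∑' k, (a 0 k - b 0 k) * u k) + ∑' k, b 0 k * (u k - v k)|
        ≤ |∑' k, (a 0 k - b 0 k) * u k| + |∑' k, b 0 k * (u k - v k)| := abs_add_le _ _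
      _ ≤ C * ∑' k, |a 0 k - b 0 k| + C * ∑ j, ∑' t, |at' j t - bt j t| := add_le_add t1 t2
      _ = C * ∑ j : Fin (n+1), ∑' k, |a j k - b j k| := by
          rw [Fin.sum_univ_succ]
          ring

end multi


section poissonMulti

lemma sum_cons {n : ℕ} (k : ℕ) (y : Fin n → ℕ) :
    (∑ j, (Fin.cons k y : Fin (n + 1) → ℕ) j) = k + ∑ j, y j := by
  rw [Fin.sum_univ_succ]
  simp

lemma poi_prob (lam : ℝ) (hl : 0 ≤ lam) :
    (∀ k, 0 ≤ poi lam k) ∧ Summable (poi lam) ∧ ∑' k, poi lam k = 1 :=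
  ⟨poi_nonneg hl, summable_poi lam, tsum_poi lam⟩

/-- Law of the sum of independent Poissons against a bounded test function. -/
lemma sumlaw {n : ℕ} (lam : Fin n → ℝ) (hl : ∀ j, 0 ≤ lam j) (f : ℕ → ℝ) {C : ℝ}
    (hf0 : ∀ s, 0 ≤ f s) (hfC : ∀ s, f s ≤ C) :
    ∑' x : Fin n → ℕ, PP (fun j => poi (lam j)) x * f (∑ j, x j)
      = ∑' s : ℕ, poi (∑ j, lam j) s * f s := by
  induction n generalizing f with
  | zero =>
    rw [tsum_eq_single (f := fun x : Fin 0 → ℕ => PP (fun j => poi (lam j)) x * f (∑ j, x j))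
      default (fun x hx => absurd (Subsingleton.elim x default) hx)]
    rw [tsum_eq_single 0 (by
      intro s hs
      have : poi (∑ j : Fin 0, lam j) s = 0 := by
        simp only [Finset.univ_eq_empty, Finset.sum_empty]
        unfold poi
        rw [zero_pow hs]
        simp
      rw [this, zero_mul])]
    have h0 : poi (∑ j : Fin 0, lam j) 0 = 1 := by
      simp [poi]
    rw [h0]
    simp [PP]
  | succ n ih =>
    have ha0 : ∀ (j : Fin (n+1)) (k : ℕ), 0 ≤ poi (lam j) k := fun j k => poi_nonneg (hl j) k
    have has : ∀ j : Fin (n+1), Summable (poi (lam j)) := fun j => summable_poi _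
    rw [tsum_PP_cons (fun j => poi (lam j)) ha0 has (fun x => f (∑ j, x j))
      (fun x => hf0 _) (fun x => hfC _)]
    have inner : ∀ k : ℕ,
        ∑' y : Fin n → ℕ, PP (fun j : Fin n => poi (lam j.succ)) y * f (∑ j, (Fin.cons k y : Fin (n+1) → ℕ) j)
          = ∑' s : ℕ, poi (∑ j : Fin n, lam j.succ) s * f (k + s) := by
      intro k
      have := ih (fun j => lam j.succ) (fun j => hl j.succ) (fun s => f (k + s))
        (fun s => hf0 _) (fun s => hfC _)
      rw [← this]
      apply tsum_congr
      intro y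
      rw [sum_cons]
    rw [tsum_congr (fun k => by rw [inner k])]
    -- now: ∑' k, poi (lam 0) k * ∑' s, poi (Λ') s * f (k + s) = ∑' s, poi (Σ lam) s * f s
    set L' := ∑ j : Fin n, lam j.succ with hL'
    have hL'0 : 0 ≤ L' := Finset.sum_nonneg (fun j _ => hl j.succ)
    have hm := master (a := poi (lam 0)) (b := poi L') (f := f)
      (poi_nonneg (hl 0)) (poi_nonneg hL'0) (summable_poi _) (summable_poi _) hf0 hfC
    have e1 : ∀ k : ℕ, poi (lam 0) k * ∑' s, poi L' s * f (k + s)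
        = ∑' s, poi (lam 0) k * poi L' s * f (k + s) := by
      intro k
      rw [← tsum_mul_left]
      exact tsum_congr (fun s => (mul_assoc _ _ _).symm)
    rw [tsum_congr e1, ← hm.2]
    apply tsum_congr
    intro s
    rw [poi_conv, Fin.sum_univ_succ]

lemma sizebias0 {n : ℕ} (lam : Fin (n + 1) → ℝ) (hl : ∀ j, 0 ≤ lam j) (g : ℕ → ℝ) {C D : ℝ}
    (hg0 : ∀ s, 0 ≤ g s) (hgC : ∀ s, g s ≤ C)
    (hbound : ∀ k s : ℕ, k ≤ s → (k : ℝ) * g s ≤ D) :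
    ∑' x : Fin (n + 1) → ℕ, PP (fun j => poi (lam j)) x * ((x 0 : ℝ) * g (∑ j, x j))
      = lam 0 * ∑' x : Fin (n + 1) → ℕ, PP (fun j => poi (lam j)) x * g (∑ j, x j + 1) := by
  have ha0 : ∀ (j : Fin (n+1)) (k : ℕ), 0 ≤ poi (lam j) k := fun j k => poi_nonneg (hl j) k
  have has : ∀ j : Fin (n+1), Summable (poi (lam j)) := fun j => summable_poi _
  have hat0 : ∀ (j : Fin n) (k : ℕ), 0 ≤ poi (lam j.succ) k := fun j k => poi_nonneg (hl j.succ) k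
  have hats : ∀ j : Fin n, Summable (poi (lam j.succ)) := fun j => summable_poi _
  have hPPt1 : ∑' y : Fin n → ℕ, PP (fun j : Fin n => poi (lam j.succ)) y = 1 := by
    rw [(PP_summable_tsum _ hat0 hats).2]
    simp [tsum_poi]
  have hf0 : ∀ x : Fin (n+1) → ℕ, 0 ≤ (x 0 : ℝ) * g (∑ j, x j) :=
    fun x => mul_nonneg (Nat.cast_nonneg _) (hg0 _)
  have hxle : ∀ (x : Fin (n+1) → ℕ), x 0 ≤ ∑ j, x j :=
    fun x => Finset.single_le_sum (f := fun j => x j) (fun j _ => Nat.zero_le _) (Finset.mem_univ 0)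
  have hfD : ∀ x : Fin (n+1) → ℕ, (x 0 : ℝ) * g (∑ j, x j) ≤ D :=
    fun x => hbound _ _ (hxle x)
  set u := fun k : ℕ => ∑' y : Fin n → ℕ, PP (fun j : Fin n => poi (lam j.succ)) y * g (k + ∑ j, y j)
    with hu
  have hu0 : ∀ k, 0 ≤ u k := fun k =>
    tsum_nonneg (fun y => mul_nonneg (PP_nonneg hat0 y) (hg0 _))
  have huC : ∀ k, u k ≤ C := by
    intro k
    calc u k ≤ ∑' y, PP (fun j : Fin n => poi (lam j.succ)) y * C :=
          Summable.tsum_le_tsum (fun y => mul_le_mul_of_nonneg_left (hgC _) (PP_nonneg hat0 y))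
            (PP_test_summable hat0 hats (fun y => hg0 _) (fun y => hgC _))
            (((PP_summable_tsum _ hat0 hats).1).mul_right C)
      _ = C := by rw [tsum_mul_right, hPPt1, one_mul]
  have husum : ∀ k : ℕ, Summable (fun y : Fin n → ℕ =>
      PP (fun j : Fin n => poi (lam j.succ)) y * g (k + ∑ j, y j)) :=
    fun k => PP_test_summable hat0 hats (fun y => hg0 _) (fun y => hgC _)
  -- LHS
  rw [tsum_PP_cons (fun j => poi (lam j)) ha0 has _ hf0 hfD]
  have innerL : ∀ k : ℕ,
      ∑' y : Fin n → ℕ, PP (fun j : Fin n => poi (lam j.succ)) y *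
        (((Fin.cons k y : Fin (n+1) → ℕ) 0 : ℝ) * g (∑ j, (Fin.cons k y : Fin (n+1) → ℕ) j))
      = (k : ℝ) * u k := by
    intro k
    rw [hu, ← tsum_mul_left]
    apply tsum_congr
    intro y
    rw [Fin.cons_zero, sum_cons]
    ring
  -- RHS
  rw [tsum_PP_cons (fun j => poi (lam j)) ha0 has (fun x => g (∑ j, x j + 1))
    (fun x => hg0 _) (fun x => hgC _)]
  have innerR : ∀ k : ℕ,
      ∑' y : Fin n → ℕ, PP (fun j : Fin n => poi (lam j.succ)) y *
        g (∑ j, (Fin.cons k y : Fin (n+1) → ℕ) j + 1)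
      = u (k + 1) := by
    intro k
    rw [hu]
    apply tsum_congr
    intro y
    rw [sum_cons, show k + (∑ j, y j) + 1 = (k + 1) + ∑ j, y j by omega]
  have eL : ∑' (k : ℕ), poi (lam 0) k * ∑' (y : Fin n → ℕ),
      PP (fun j : Fin n => poi (lam j.succ)) y *
        (((Fin.cons k y : Fin (n+1) → ℕ) 0 : ℝ) * g (∑ j, (Fin.cons k y : Fin (n+1) → ℕ) j))
      = ∑' (k : ℕ), poi (lam 0) k * ((k : ℝ) * u k) :=
    tsum_congr (fun k => by rw [innerL k])
  have eR : ∑' (k : ℕ), poi (lam 0) k * ∑' (y : Fin n → ℕ),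
      PP (fun j : Fin n => poi (lam j.succ)) y *
        g (∑ j, (Fin.cons k y : Fin (n+1) → ℕ) j + 1)
      = ∑' (k : ℕ), poi (lam 0) k * u (k + 1) :=
    tsum_congr (fun k => by rw [innerR k])
  rw [eL, eR]
  exact SB1 (hl 0) hu0 huC

def permEquiv {n : ℕ} (σ : Equiv.Perm (Fin n)) : (Fin n → ℕ) ≃ (Fin n → ℕ) where
  toFun := fun x j => x (σ j)
  invFun := fun x j => x (σ.symm j)
  left_inv := fun x => by funext j; simp
  right_inv := fun x => by funext j; simp

lemma swap_transfer {n : ℕ} (σ : Equiv.Perm (Fin n)) (H : (Fin n → ℕ) → ℝ) :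
    ∑' x : Fin n → ℕ, H x = ∑' x : Fin n → ℕ, H (fun j => x (σ j)) :=
  ((Equiv.tsum_eq (permEquiv σ) H).symm).trans (tsum_congr (fun c => rfl))

lemma sizebias {n : ℕ} (lam : Fin (n + 1) → ℝ) (hl : ∀ j, 0 ≤ lam j) (l : Fin (n + 1))
    (g : ℕ → ℝ) {C D : ℝ}
    (hg0 : ∀ s, 0 ≤ g s) (hgC : ∀ s, g s ≤ C)
    (hbound : ∀ k s : ℕ, k ≤ s → (k : ℝ) * g s ≤ D) :
    ∑' x : Fin (n + 1) → ℕ, PP (fun j => poi (lam j)) x * ((x l : ℝ) * g (∑ j, x j))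
      = lam l * ∑' x : Fin (n + 1) → ℕ, PP (fun j => poi (lam j)) x * g (∑ j, x j + 1) := by
  set σ := Equiv.swap (0 : Fin (n + 1)) l with hσ
  have reindex : ∀ x : Fin (n + 1) → ℕ,
      PP (fun j => poi (lam j)) (fun j => x (σ j)) = PP (fun j => poi (lam (σ j))) x := by
    intro x
    show (∏ j, poi (lam j) (x (σ j))) = ∏ j, poi (lam (σ j)) (x j)
    have h := Equiv.prod_comp σ (fun i => poi (lam (σ.symm i)) (x i))
    simp only [Equiv.symm_apply_apply] at h
    rw [h]
    apply Finset.prod_congr rfl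
    intro j _
    simp [hσ, Equiv.symm_swap]
  have sums : ∀ x : Fin (n + 1) → ℕ, (∑ j, x (σ j)) = ∑ j, x j :=
    fun x => Equiv.sum_comp σ x
  have hL : ∑' x : Fin (n + 1) → ℕ, PP (fun j => poi (lam j)) x * ((x l : ℝ) * g (∑ j, x j))
      = ∑' x : Fin (n + 1) → ℕ, PP (fun j => poi (lam (σ j))) x * ((x 0 : ℝ) * g (∑ j, x j)) := by
    rw [swap_transfer σ]
    apply tsum_congr
    intro x
    beta_reduce
    rw [reindex x]
    have h1 : x (σ l) = x 0 := by rw [hσ, Equiv.swap_apply_right]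
    rw [h1, sums x]
  have hR : ∑' x : Fin (n + 1) → ℕ, PP (fun j => poi (lam j)) x * g (∑ j, x j + 1)
      = ∑' x : Fin (n + 1) → ℕ, PP (fun j => poi (lam (σ j))) x * g (∑ j, x j + 1) := by
    rw [swap_transfer σ]
    apply tsum_congr
    intro x
    beta_reduce
    rw [reindex x, sums x]
  rw [hL, hR]
  have h0 : lam (σ 0) = lam l := by rw [hσ, Equiv.swap_apply_left]
  rw [← h0]
  exact sizebias0 (fun j => lam (σ j)) (fun j => hl _) g hg0 hgC hbound

end poissonMulti


section marg
open MeasureTheory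

lemma marg_binomial {Mj : ℕ} {pj : NNReal} (hpj : pj ≤ 1) (k : ℕ) :
    ((Measure.map (Fin.val)
        ((PMF.binomial pj hpj Mj).toMeasure)) {k}).toReal
      = binR Mj (pj : ℝ) k := by
  rw [Measure.map_apply (measurable_of_countable _) (measurableSet_singleton k)]
  by_cases hk : k ≤ Mj
  · have hpre : (Fin.val ⁻¹' {k} : Set (Fin (Mj + 1))) = {⟨k, by omega⟩} := by
      ext i
      simp [Fin.ext_iff]
    rw [hpre, PMF.toMeasure_apply_singleton _ _ (measurableSet_singleton _),
      PMF.binomial_apply]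
    have hsub : (1 : ENNReal) - (pj : ENNReal) = ((1 - pj : NNReal) : ENNReal) := by
      rw [ENNReal.coe_sub]
      simp
    have hexp : ((Fin.last Mj : Fin (Mj + 1)) : ℕ) - ((⟨k, by omega⟩ : Fin (Mj + 1)) : ℕ)
        = Mj - k := rfl
    rw [hexp, hsub]
    rw [ENNReal.toReal_mul, ENNReal.toReal_mul, ENNReal.toReal_pow, ENNReal.toReal_pow,
      ENNReal.coe_toReal, ENNReal.coe_toReal]
    have h1 : ((1 - pj : NNReal) : ℝ) = 1 - (pj : ℝ) := by
      rw [NNReal.coe_sub hpj]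
      simp
    have h2 : ((Mj.choose k : ENNReal)).toReal = (Mj.choose k : ℝ) := by
      simp
    rw [h1, h2]
    unfold binR
    ring
  · have hpre : (Fin.val ⁻¹' {k} : Set (Fin (Mj + 1))) = ∅ := by
      ext i
      simp only [Set.mem_preimage, Set.mem_singleton_iff, Set.mem_empty_iff_false, iff_false]
      omega
    rw [hpre]
    rw [binR_zero_of_lt (show Mj < k by omega)]
    simp

end marg

end CouponAux

open CouponAux

/-- Poisson approximation of the expected number of coupons distributed at one step of the
chain-referral sampling. Let `Z_1, …, Z_m` be independent binomial random variables,
`Z_j ∼ Bin(M_j, p_j)`, let `λ_j = M_j p_j`, `Λ = Σ_j λ_j > 0` and `S = Z_1 + … + Z_m`.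
Then for every `l`,
`|E[Z_l · 1_{S ≤ c} + c (Z_l/S) 1_{S > c}] − (λ_l/Λ)(c − Σ_{h=0}^{c}(c−h)Λ^h e^{−Λ}/h!)|
  ≤ 2c · Σ_j M_j p_j²`. -/
theorem coupon_expectation_poisson_approx {Ω : Type*} [MeasurableSpace Ω]
    (μ : Measure Ω) [IsProbabilityMeasure μ]
    (m c : ℕ) (hm : 1 ≤ m) (hc : 1 ≤ c)
    (M : Fin m → ℕ) (p : Fin m → NNReal) (hp : ∀ j, p j ≤ 1)
    (Z : Fin m → Ω → ℕ)
    (hindep : iIndepFun Z μ)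
    (hZ : ∀ j, Measure.map (Z j) μ =
      Measure.map (Fin.val)
        ((PMF.binomial (p j) (hp j) (M j)).toMeasure))
    (hΛ : 0 < ∑ j, (M j : ℝ) * (p j : ℝ))
    (l : Fin m) :
    |(∫ ω, ((Z l ω : ℝ) * (if (∑ j, Z j ω) ≤ c then (1 : ℝ) else 0)
          + (c : ℝ) * ((Z l ω : ℝ) / ((∑ j, Z j ω : ℕ) : ℝ)) *
              (if c < ∑ j, Z j ω then (1 : ℝ) else 0)) ∂μ)
      - ((M l : ℝ) * (p l : ℝ) / (∑ j, (M j : ℝ) * (p j : ℝ))) *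
          ((c : ℝ) - ∑ h ∈ Finset.range (c + 1),
            ((c : ℝ) - (h : ℝ)) * (∑ j, (M j : ℝ) * (p j : ℝ)) ^ h *
              Real.exp (-(∑ j, (M j : ℝ) * (p j : ℝ))) / (Nat.factorial h))| ≤
      2 * (c : ℝ) * ∑ j, (M j : ℝ) * (p j : ℝ) ^ 2 := by
  obtain ⟨n, rfl⟩ : ∃ n, m = n + 1 := ⟨m - 1, by omega⟩
  have hc0 : (0 : ℝ) < c := by exact_mod_cast hc
  -- real parameters
  have hpr0 : ∀ j, (0 : ℝ) ≤ (p j : ℝ) := fun j => (p j).coe_nonneg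
  have hpr1 : ∀ j, (p j : ℝ) ≤ 1 := fun j => by exact_mod_cast hp j
  have hlam0 : ∀ j : Fin (n+1), 0 ≤ (M j : ℝ) * (p j : ℝ) :=
    fun j => mul_nonneg (Nat.cast_nonneg _) (hpr0 j)
  have hΛ0 : (0:ℝ) < ∑ j, (M j : ℝ) * (p j : ℝ) := hΛ
  -- the test function
  set g : ℕ → ℝ := fun s => if s ≤ c then (1 : ℝ) else (c : ℝ) / (s : ℝ) with hgdef
  have hg0 : ∀ s, 0 ≤ g s := by
    intro s
    by_cases h : s ≤ c
    · simp [hgdef, h]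
    · simp only [hgdef, if_neg h]
      positivity
  have hg1 : ∀ s, g s ≤ 1 := by
    intro s
    by_cases h : s ≤ c
    · simp [hgdef, h]
    · simp only [hgdef, if_neg h]
      have hcs : c < s := not_le.mp h
      have hs0 : (0:ℝ) < (s:ℝ) := by
        have : 0 < s := by omega
        exact_mod_cast this
      rw [div_le_one hs0]
      exact_mod_cast le_of_lt hcs
  have hbound : ∀ k s : ℕ, k ≤ s → (k : ℝ) * g s ≤ (c : ℝ) := by
    intro k s hks
    rw [hgdef]
    by_cases hsc : s ≤ c
    · simp only [if_pos hsc, mul_one]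
      exact_mod_cast le_trans hks hsc
    · simp only [if_neg hsc]
      have hs0 : (0:ℝ) < (s:ℝ) := by
        have : c < s := not_le.mp hsc
        have : 0 < s := by omega
        exact_mod_cast this
      have h1 : (k : ℝ) * ((c:ℝ) / s) ≤ (s : ℝ) * ((c:ℝ)/s) := by
        apply mul_le_mul_of_nonneg_right _ (by positivity)
        exact_mod_cast hks
      calc (k : ℝ) * ((c:ℝ) / s) ≤ (s : ℝ) * ((c:ℝ)/s) := h1
        _ = c := by field_simp
  set f : (Fin (n+1) → ℕ) → ℝ := fun x => ((x l : ℕ) : ℝ) * g (∑ j, x j) with hfdef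
  have hxle : ∀ (x : Fin (n+1) → ℕ), ((x l : ℕ):ℝ) ≤ ((∑ j, x j : ℕ) : ℝ) := by
    intro x
    exact_mod_cast Finset.single_le_sum (f := fun j => x j) (fun j _ => Nat.zero_le _)
      (Finset.mem_univ l)
  have hf0 : ∀ x, 0 ≤ f x := fun x => mul_nonneg (Nat.cast_nonneg _) (hg0 _)
  have hfC : ∀ x, f x ≤ (c : ℝ) := by
    intro x
    apply hbound
    exact_mod_cast Finset.single_le_sum (f := fun j => x j) (fun j _ => Nat.zero_le _)
      (Finset.mem_univ l)
  -- measurability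
  have hAE : ∀ j, AEMeasurable (Z j) μ := by
    intro j
    by_contra hae
    have h0 : Measure.map (Z j) μ = 0 := Measure.map_of_not_aemeasurable hae
    have h1 : IsProbabilityMeasure (Measure.map (Z j) μ) := by
      rw [hZ j]
      exact Measure.isProbabilityMeasure_map (measurable_of_countable _).aemeasurable
    have := h1.measure_univ
    rw [h0] at this
    simp at this
  set W : Ω → (Fin (n+1) → ℕ) := fun ω j => Z j ω with hWdef
  have hAEW : AEMeasurable W μ := by
    refine ⟨fun ω j => (hAE j).mk (Z j) ω, measurable_pi_lambda _ (fun j => (hAE j).measurable_mk), ?_⟩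
    have h := ae_all_iff.mpr (fun j : Fin (n+1) => (hAE j).ae_eq_mk)
    filter_upwards [h] with ω hω
    funext j
    exact hω j
  have hfmeas : Measurable f := measurable_of_countable f
  have hν : IsProbabilityMeasure (μ.map W) := Measure.isProbabilityMeasure_map hAEW
  have hint : Integrable f (μ.map W) := by
    refine (integrable_const (c : ℝ)).mono' hfmeas.aestronglyMeasurable ?_
    refine Filter.Eventually.of_forall (fun x => ?_)
    rw [Real.norm_eq_abs, abs_of_nonneg (hf0 x)]
    exact hfC x
  -- marginal identification
  have marg : ∀ (j : Fin (n+1)) (k : ℕ),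
      ((μ.map (Z j)) {k}).toReal = binR (M j) ((p j : ℝ)) k := by
    intro j k
    rw [hZ j]
    exact marg_binomial (hp j) k
  -- joint law evaluation
  have hjoint : ∀ x : Fin (n+1) → ℕ,
      ((μ.map W) {x}).toReal = PP (fun j => binR (M j) ((p j : ℝ))) x := by
    intro x
    rw [Measure.map_apply_of_aemeasurable hAEW (measurableSet_singleton x)]
    have hpre : W ⁻¹' {x} = ⋂ j ∈ Finset.univ, Z j ⁻¹' {x j} := by
      ext ω
      simp only [Set.mem_preimage, Set.mem_singleton_iff, Set.mem_iInter, Finset.mem_univ,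
        forall_const, hWdef]
      constructor
      · intro h j
        exact congrFun h j
      · intro h
        funext j
        exact h j
    rw [hpre, hindep.measure_inter_preimage_eq_mul Finset.univ
      (sets := fun j => ({x j} : Set ℕ)) (fun j _ => measurableSet_singleton _)]
    rw [ENNReal.toReal_prod]
    unfold PP
    apply Finset.prod_congr rfl
    intro j _
    beta_reduce
    rw [← marg j (x j), Measure.map_apply_of_aemeasurable (hAE j) (measurableSet_singleton _)]
  -- the integral as a sum
  have hpt : ∀ ω, ((Z l ω : ℝ) * (if (∑ j, Z j ω) ≤ c then (1 : ℝ) else 0)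
          + (c : ℝ) * ((Z l ω : ℝ) / ((∑ j, Z j ω : ℕ) : ℝ)) *
              (if c < ∑ j, Z j ω then (1 : ℝ) else 0)) = f (W ω) := by
    intro ω
    by_cases hs : (∑ j, Z j ω) ≤ c
    · simp [hfdef, hWdef, hgdef, hs, not_lt.mpr hs]
    · have hs' := not_le.mp hs
      simp only [hfdef, hWdef, hgdef, if_neg hs, if_pos hs']
      ring
  have hInt : (∫ ω, ((Z l ω : ℝ) * (if (∑ j, Z j ω) ≤ c then (1 : ℝ) else 0)
          + (c : ℝ) * ((Z l ω : ℝ) / ((∑ j, Z j ω : ℕ) : ℝ)) *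
              (if c < ∑ j, Z j ω then (1 : ℝ) else 0)) ∂μ)
      = ∑' x : Fin (n+1) → ℕ, PP (fun j => binR (M j) ((p j : ℝ))) x * f x := by
    rw [integral_congr_ae (Filter.Eventually.of_forall hpt)]
    rw [← integral_map hAEW hfmeas.aestronglyMeasurable]
    rw [integral_countable' hint]
    apply tsum_congr
    intro x
    rw [measureReal_def, hjoint x, smul_eq_mul]
  rw [hInt]
  -- Poisson side: identify target
  have hT : ∑' x : Fin (n+1) → ℕ, PP (fun j => poi ((M j : ℝ) * (p j : ℝ))) x * f x
      = ((M l : ℝ) * (p l : ℝ) / (∑ j, (M j : ℝ) * (p j : ℝ))) *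
          ((c : ℝ) - ∑ h ∈ Finset.range (c + 1),
            ((c : ℝ) - (h : ℝ)) * (∑ j, (M j : ℝ) * (p j : ℝ)) ^ h *
              Real.exp (-(∑ j, (M j : ℝ) * (p j : ℝ))) / (Nat.factorial h)) := by
    have step1 := sizebias (fun j => (M j : ℝ) * (p j : ℝ)) hlam0 l g
      (C := 1) (D := (c:ℝ)) hg0 hg1 hbound
    have step2 := sumlaw (fun j => (M j : ℝ) * (p j : ℝ)) hlam0 (fun s => g (s + 1))
      (C := 1) (fun s => hg0 _) (fun s => hg1 _)
    have step3 := SB1 (le_of_lt hΛ0) (u := g) (C := 1) hg0 hg1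
    have kg : ∀ k : ℕ, (k : ℝ) * g k = ((min k c : ℕ) : ℝ) := by
      intro k
      by_cases hkc : k ≤ c
      · simp [hgdef, hkc, min_eq_left hkc]
      · have hk0 : (k:ℝ) ≠ 0 := by
          have : 0 < k := by omega
          positivity
        simp only [hgdef, if_neg hkc]
        rw [min_eq_right (le_of_not_ge hkc)]
        field_simp
    have step4 := emin c (le_of_lt hΛ0)
    have e5 : ∑' k : ℕ, poi (∑ j, (M j : ℝ) * (p j : ℝ)) k * ((k:ℝ) * g k)
        = ∑' k : ℕ, poi (∑ j, (M j : ℝ) * (p j : ℝ)) k * ((min k c : ℕ) : ℝ) :=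
      tsum_congr (fun k => by rw [kg k])
    rw [step1, step2]
    rw [e5, step4] at step3
    have hΛne : (∑ j, (M j : ℝ) * (p j : ℝ)) ≠ 0 := ne_of_gt hΛ0
    have e6 : ∑' s : ℕ, poi (∑ j, (M j : ℝ) * (p j : ℝ)) s * g (s + 1)
        = ((c : ℝ) - ∑ h ∈ Finset.range (c + 1),
            ((c : ℝ) - (h : ℝ)) * poi (∑ j, (M j : ℝ) * (p j : ℝ)) h)
          / (∑ j, (M j : ℝ) * (p j : ℝ)) := by
      field_simp
      linarith [step3]
    rw [e6]
    have e7 : ∀ h ∈ Finset.range (c+1), ((c : ℝ) - (h : ℝ)) * poi (∑ j, (M j : ℝ) * (p j : ℝ)) h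
        = ((c : ℝ) - (h : ℝ)) * (∑ j, (M j : ℝ) * (p j : ℝ)) ^ h *
              Real.exp (-(∑ j, (M j : ℝ) * (p j : ℝ))) / (Nat.factorial h) := by
      intro h _
      unfold poi
      ring
    rw [Finset.sum_congr rfl e7]
    field_simp
    congr 2
    exact Finset.sum_congr rfl (fun x _ => by ring)
  rw [← hT]
  -- TV bound
  have hTEL := TEL (fun j => binR (M j) ((p j : ℝ))) (fun j => poi ((M j : ℝ) * (p j : ℝ)))
    (fun j k => binR_nonneg (hpr0 j) (hpr1 j) (M j) k)
    (fun j k => poi_nonneg (hlam0 j) k)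
    (fun j => summable_binR (M j) _)
    (fun j => summable_poi _)
    (fun j => tsum_binR (M j) _)
    (fun j => tsum_poi _)
    f hf0 hfC
  refine le_trans hTEL ?_
  have hstep : ∑ j : Fin (n+1), ∑' k, |binR (M j) ((p j : ℝ)) k - poi ((M j : ℝ) * (p j : ℝ)) k|
      ≤ ∑ j : Fin (n+1), 2 * (M j : ℝ) * (p j : ℝ) ^ 2 :=
    Finset.sum_le_sum (fun j _ => lecam (M j) (hpr0 j) (hpr1 j))
  calc (c:ℝ) * ∑ j : Fin (n+1), ∑' k, |binR (M j) ((p j : ℝ)) k - poi ((M j : ℝ) * (p j : ℝ)) k|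
      ≤ (c:ℝ) * ∑ j : Fin (n+1), 2 * (M j : ℝ) * (p j : ℝ) ^ 2 :=
        mul_le_mul_of_nonneg_left hstep (le_of_lt hc0)
    _ = 2 * (c : ℝ) * ∑ j, (M j : ℝ) * (p j : ℝ) ^ 2 := by
        rw [Finset.mul_sum, Finset.mul_sum]
        apply Finset.sum_congr rfl
        intro j _
        ring
end

section
/- Let T ∈ (0, 1] and δ > 0, and let x¹, x² : [0, T] → ℝ^{3m} be continuous functions, written x^i = (a^i, b^i, u^i) with a^i, b^i, u^i : [0, T] → ℝ^m, such that: (i) x¹_0 = x²_0; (ii) each x^i satisfies the integral equation x^i_t = x^i_0 + ∫_0^t f(x^i_s) ds for all t ∈ [0, T]; (iii) for i = 1, 2 and all t ∈ [0, T], all coordinates a^{i,(l)}_t are nonnegative, ‖a^i_t‖ := Σ_{l=1}^m a^{i,(l)}_t ≥ δ, and Λ^k(x^i_t) ≥ δ for all k ∈ {1, …, m}. Then x¹_t = x²_t for all t ∈ [0, T]. -/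
open MeasureTheory Finset

/-- `φ(c, Λ) = c − Σ_{h=0}^{c} (c−h) Λ^h e^{−Λ}/h!`, the expected number of coupons
distributed when the number of candidates is Poisson with parameter `Λ` and at most `c`
coupons are handed out. -/
noncomputable def crsPhi (c : ℕ) (L : ℝ) : ℝ :=
  (c : ℝ) - ∑ h ∈ Finset.range (c + 1),
    ((c : ℝ) - (h : ℝ)) * L ^ h * Real.exp (-L) / (Nat.factorial h)

/-- `λ^{k,l}(x) = λ_{kl} (π_l − a^{(l)} − u^{(l)})`. -/
def crsLam {m : ℕ} (lam : Fin m → Fin m → ℝ) (pi : Fin m → ℝ)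
    (a u : Fin m → ℝ) (k l : Fin m) : ℝ :=
  lam k l * (pi l - a l - u l)

/-- `Λ^k(x) = Σ_{l=1}^m λ^{k,l}(x)`. -/
def crsLamTot {m : ℕ} (lam : Fin m → Fin m → ℝ) (pi : Fin m → ℝ)
    (a u : Fin m → ℝ) (k : Fin m) : ℝ :=
  ∑ l, crsLam lam pi a u k l

/-- `μ^{k,l}(x) = λ_{kl} (π_l − a^{(l)} − b^{(l)} − u^{(l)})`. -/
def crsMu {m : ℕ} (lam : Fin m → Fin m → ℝ) (pi : Fin m → ℝ)
    (a b u : Fin m → ℝ) (k l : Fin m) : ℝ :=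
  lam k l * (pi l - a l - b l - u l)

/-- `‖a‖ = Σ_{l=1}^m a^{(l)}`. -/
def crsNorm {m : ℕ} (a : Fin m → ℝ) : ℝ := ∑ l, a l

/-- First component of the limiting vector field of the chain-referral sampling process. -/
noncomputable def crsF1 {m : ℕ} (c : ℕ) (lam : Fin m → Fin m → ℝ) (pi : Fin m → ℝ)
    (a u : Fin m → ℝ) (l : Fin m) : ℝ :=
  (∑ k, (a k / crsNorm a) * (crsLam lam pi a u k l / crsLamTot lam pi a u k) *
      crsPhi c (crsLamTot lam pi a u k)) - a l / crsNorm a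

/-- Second component of the limiting vector field of the chain-referral sampling process. -/
noncomputable def crsF2 {m : ℕ} (c : ℕ) (lam : Fin m → Fin m → ℝ) (pi : Fin m → ℝ)
    (a b u : Fin m → ℝ) (l : Fin m) : ℝ :=
  (∑ k, (a k / crsNorm a) * crsMu lam pi a b u k l) -
    ∑ k, (a k / crsNorm a) * (crsLam lam pi a u k l / crsLamTot lam pi a u k) *
      crsPhi c (crsLamTot lam pi a u k)

/-- Third component of the limiting vector field of the chain-referral sampling process. -/
noncomputable def crsF3 {m : ℕ} (a : Fin m → ℝ) (l : Fin m) : ℝ := a l / crsNorm a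


section CrsAux

open intervalIntegral

/-- The state space of the chain-referral sampling ODE. -/
abbrev crsE (m : ℕ) := (Fin m → ℝ) × (Fin m → ℝ) × (Fin m → ℝ)

/-- The full limiting vector field as a map on the state space. -/
noncomputable def crsF {m : ℕ} (c : ℕ) (lam : Fin m → Fin m → ℝ) (pi : Fin m → ℝ)
    (p : crsE m) : crsE m :=
  (fun l => crsF1 c lam pi p.1 p.2.2 l,
   fun l => crsF2 c lam pi p.1 p.2.1 p.2.2 l,
   fun l => crsF3 p.1 l)

/-- Open set where the denominators of the vector field do not vanish. -/
def crsU {m : ℕ} (lam : Fin m → Fin m → ℝ) (pi : Fin m → ℝ) : Set (crsE m) :=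
  {p | 0 < crsNorm p.1 ∧ ∀ k, 0 < crsLamTot lam pi p.1 p.2.2 k}

lemma crsPhi_contDiff (c : ℕ) : ContDiff ℝ 1 (crsPhi c) := by
  unfold crsPhi
  apply ContDiff.sub contDiff_const
  apply ContDiff.sum
  intro h _
  exact (((contDiff_const.mul (contDiff_id.pow h)).mul
    (Real.contDiff_exp.comp contDiff_id.neg)).div_const _)

lemma crsNorm_cont {m : ℕ} : Continuous fun p : crsE m => crsNorm p.1 := by
  unfold crsNorm
  exact continuous_finset_sum _ fun l _ => (continuous_apply l).comp continuous_fst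

lemma crsLamTot_cont {m : ℕ} (lam : Fin m → Fin m → ℝ) (pi : Fin m → ℝ) (k : Fin m) :
    Continuous fun p : crsE m => crsLamTot lam pi p.1 p.2.2 k := by
  unfold crsLamTot crsLam
  apply continuous_finset_sum _ fun l _ => ?_
  exact continuous_const.mul ((continuous_const.sub
    ((continuous_apply l).comp continuous_fst)).sub
    ((continuous_apply l).comp (continuous_snd.comp continuous_snd)))

lemma crsU_isOpen {m : ℕ} (lam : Fin m → Fin m → ℝ) (pi : Fin m → ℝ) :
    IsOpen (crsU (m := m) lam pi) := by
  have : crsU (m := m) lam pi =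
      ({p : crsE m | 0 < crsNorm p.1} ∩ ⋂ k, {p | 0 < crsLamTot lam pi p.1 p.2.2 k}) := by
    ext p; simp [crsU, Set.mem_iInter]
  rw [this]
  exact (isOpen_lt continuous_const crsNorm_cont).inter
    (isOpen_iInter_of_finite fun k => isOpen_lt continuous_const (crsLamTot_cont lam pi k))

lemma crsF_contDiffOn {m : ℕ} (c : ℕ) (lam : Fin m → Fin m → ℝ) (pi : Fin m → ℝ) :
    ContDiffOn ℝ 1 (crsF (m := m) c lam pi) (crsU lam pi) := by
  have hN : ContDiff ℝ 1 fun p : crsE m => crsNorm p.1 := by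
    unfold crsNorm
    exact ContDiff.sum fun l _ => (contDiff_apply ℝ ℝ l).comp contDiff_fst
  have ha : ∀ l : Fin m, ContDiff ℝ 1 fun p : crsE m => p.1 l :=
    fun l => (contDiff_apply ℝ ℝ l).comp contDiff_fst
  have hb : ∀ l : Fin m, ContDiff ℝ 1 fun p : crsE m => p.2.1 l :=
    fun l => (contDiff_apply ℝ ℝ l).comp (contDiff_fst.comp contDiff_snd)
  have hu : ∀ l : Fin m, ContDiff ℝ 1 fun p : crsE m => p.2.2 l :=
    fun l => (contDiff_apply ℝ ℝ l).comp (contDiff_snd.comp contDiff_snd)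
  have hLam : ∀ k l, ContDiff ℝ 1 fun p : crsE m => crsLam lam pi p.1 p.2.2 k l := by
    intro k l; unfold crsLam
    exact contDiff_const.mul ((contDiff_const.sub (ha l)).sub (hu l))
  have hL : ∀ k, ContDiff ℝ 1 fun p : crsE m => crsLamTot lam pi p.1 p.2.2 k := by
    intro k; unfold crsLamTot; exact ContDiff.sum fun l _ => hLam k l
  have hMu : ∀ k l, ContDiff ℝ 1 fun p : crsE m => crsMu lam pi p.1 p.2.1 p.2.2 k l := by
    intro k l; unfold crsMu
    exact contDiff_const.mul (((contDiff_const.sub (ha l)).sub (hb l)).sub (hu l))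
  have hNne : ∀ p ∈ crsU (m := m) lam pi, crsNorm p.1 ≠ 0 := fun p hp => ne_of_gt hp.1
  have hLne : ∀ k, ∀ p ∈ crsU (m := m) lam pi, crsLamTot lam pi p.1 p.2.2 k ≠ 0 :=
    fun k p hp => ne_of_gt (hp.2 k)
  have haN : ∀ k, ContDiffOn ℝ 1 (fun p : crsE m => p.1 k / crsNorm p.1) (crsU lam pi) :=
    fun k => (ha k).contDiffOn.div hN.contDiffOn hNne
  have hquot : ∀ k l, ContDiffOn ℝ 1
      (fun p : crsE m => crsLam lam pi p.1 p.2.2 k l / crsLamTot lam pi p.1 p.2.2 k)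
      (crsU lam pi) :=
    fun k l => (hLam k l).contDiffOn.div (hL k).contDiffOn (hLne k)
  have hphi : ∀ k, ContDiffOn ℝ 1
      (fun p : crsE m => crsPhi c (crsLamTot lam pi p.1 p.2.2 k)) (crsU lam pi) :=
    fun k => ((crsPhi_contDiff c).comp (hL k)).contDiffOn
  have hF1 : ∀ l, ContDiffOn ℝ 1 (fun p : crsE m => crsF1 c lam pi p.1 p.2.2 l)
      (crsU lam pi) := by
    intro l; unfold crsF1
    exact (ContDiffOn.sum fun k _ => ((haN k).mul (hquot k l)).mul (hphi k)).sub (haN l)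
  have hF2 : ∀ l, ContDiffOn ℝ 1 (fun p : crsE m => crsF2 c lam pi p.1 p.2.1 p.2.2 l)
      (crsU lam pi) := by
    intro l; unfold crsF2
    exact (ContDiffOn.sum fun k _ => (haN k).mul (hMu k l).contDiffOn).sub
      (ContDiffOn.sum fun k _ => ((haN k).mul (hquot k l)).mul (hphi k))
  have hF3 : ∀ l, ContDiffOn ℝ 1 (fun p : crsE m => crsF3 p.1 l) (crsU lam pi) := by
    intro l; unfold crsF3; exact (ha l).contDiffOn.div hN.contDiffOn hNne
  unfold crsF
  exact ContDiffOn.prodMk (contDiffOn_pi.2 hF1)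
    (ContDiffOn.prodMk (contDiffOn_pi.2 hF2) (contDiffOn_pi.2 hF3))

lemma crs_lipschitz_aux {E F : Type*} [NormedAddCommGroup E] [NormedSpace ℝ E]
    [NormedAddCommGroup F] [NormedSpace ℝ F]
    {f : E → F} {U s : Set E} (hU : IsOpen U) (hf : ContDiffOn ℝ 1 f U)
    (hsU : s ⊆ U) (hsc : IsCompact s) (hconv : Convex ℝ s) :
    ∃ K : NNReal, LipschitzOnWith K f s := by
  have hcont : ContinuousOn (fderiv ℝ f) U :=
    hf.continuousOn_fderiv_of_isOpen hU le_rfl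
  obtain ⟨C, hC⟩ := hsc.exists_bound_of_continuousOn ((hcont.mono hsU))
  refine ⟨⟨max C 0, le_max_right _ _⟩, ?_⟩
  apply Convex.lipschitzOnWith_of_nnnorm_fderiv_le
    (fun x hx => (hf.differentiableOn one_ne_zero).differentiableAt (hU.mem_nhds (hsU hx)))
    ?_ hconv
  intro x hx
  apply NNReal.coe_le_coe.mp
  exact le_trans (hC x hx) (le_max_left _ _)

lemma crs_ftc_aux {T : ℝ} (g x : ℝ → ℝ)
    (hg : ContinuousOn g (Set.Icc 0 T))
    (hx : ∀ u ∈ Set.Icc (0:ℝ) T, x u = x 0 + ∫ s in (0:ℝ)..u, g s)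
    {t : ℝ} (ht : t ∈ Set.Ico (0:ℝ) T) :
    HasDerivWithinAt x (g t) (Set.Ici t) t := by
  have htT : t ∈ Set.Icc (0:ℝ) T := ⟨ht.1, ht.2.le⟩
  have hmem : Set.Icc (0:ℝ) T ∈ nhdsWithin t (Set.Ioi t) := by
    filter_upwards [inter_mem_nhdsWithin (Set.Ioi t) (Iio_mem_nhds ht.2), self_mem_nhdsWithin]
      with u hu hu'
    exact ⟨le_trans ht.1 (le_of_lt hu.1), le_of_lt hu.2⟩
  have hmem' : Set.Icc (0:ℝ) T ∈ nhdsWithin t (Set.Ici t) := by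
    filter_upwards [inter_mem_nhdsWithin (Set.Ici t) (Iio_mem_nhds ht.2), self_mem_nhdsWithin]
      with u hu hu'
    exact ⟨le_trans ht.1 hu.1, le_of_lt hu.2⟩
  have hint : IntervalIntegrable g volume 0 t := by
    apply ContinuousOn.intervalIntegrable
    apply hg.mono
    rw [Set.uIcc_of_le ht.1]
    exact Set.Icc_subset_Icc le_rfl ht.2.le
  have hmeas : StronglyMeasurableAtFilter g (nhdsWithin t (Set.Ioi t)) :=
    ⟨Set.Icc 0 T, hmem, hg.aestronglyMeasurable measurableSet_Icc⟩
  have hcw : ContinuousWithinAt g (Set.Ioi t) t :=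
    (hg t htT).mono_of_mem_nhdsWithin hmem
  have h2 : HasDerivWithinAt (fun u => x 0 + ∫ s in (0:ℝ)..u, g s) (g t) (Set.Ici t) t :=
    (intervalIntegral.integral_hasDerivWithinAt_right hint hmeas hcw).const_add _
  refine h2.congr_of_eventuallyEq ?_ (hx t htT)
  filter_upwards [hmem'] with u hu
  exact hx u hu

/-- The constraint set: nonnegative `a`, `‖a‖ ≥ δ`, `Λ^k ≥ δ`, inside a closed ball. -/
def crsS {m : ℕ} (lam : Fin m → Fin m → ℝ) (pi : Fin m → ℝ) (δ R : ℝ) : Set (crsE m) :=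
  {p | (∀ l, 0 ≤ p.1 l) ∧ δ ≤ crsNorm p.1 ∧ ∀ k, δ ≤ crsLamTot lam pi p.1 p.2.2 k} ∩
    Metric.closedBall 0 R

lemma crsS_convex {m : ℕ} (lam : Fin m → Fin m → ℝ) (pi : Fin m → ℝ) (δ R : ℝ) :
    Convex ℝ (crsS (m := m) lam pi δ R) := by
  apply Convex.inter ?_ (convex_closedBall 0 R)
  intro p hp q hq τ θ hτ hθ hτθ
  have hθ' : θ = 1 - τ := by linarith
  subst hθ'
  refine ⟨fun l => ?_, ?_, fun k => ?_⟩
  · have : (τ • p + (1 - τ) • q).1 l = τ * p.1 l + (1 - τ) * q.1 l := rfl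
    rw [this]
    exact add_nonneg (mul_nonneg hτ (hp.1 l)) (mul_nonneg hθ (hq.1 l))
  · have : crsNorm (τ • p + (1 - τ) • q).1 =
        τ * crsNorm p.1 + (1 - τ) * crsNorm q.1 := by
      unfold crsNorm
      rw [Finset.mul_sum, Finset.mul_sum, ← Finset.sum_add_distrib]
      rfl
    rw [this]
    nlinarith [hp.2.1, hq.2.1]
  · have : crsLamTot lam pi (τ • p + (1 - τ) • q).1 (τ • p + (1 - τ) • q).2.2 k =
        τ * crsLamTot lam pi p.1 p.2.2 k + (1 - τ) * crsLamTot lam pi q.1 q.2.2 k := by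
      unfold crsLamTot crsLam
      rw [Finset.mul_sum, Finset.mul_sum, ← Finset.sum_add_distrib]
      apply Finset.sum_congr rfl
      intro l _
      have h1 : (τ • p + (1 - τ) • q).1 l = τ * p.1 l + (1 - τ) * q.1 l := rfl
      have h2 : (τ • p + (1 - τ) • q).2.2 l = τ * p.2.2 l + (1 - τ) * q.2.2 l := rfl
      rw [h1, h2]; ring
    rw [this]
    nlinarith [hp.2.2 k, hq.2.2 k]

lemma crsS_compact {m : ℕ} (lam : Fin m → Fin m → ℝ) (pi : Fin m → ℝ) (δ R : ℝ) :
    IsCompact (crsS (m := m) lam pi δ R) := by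
  apply IsCompact.of_isClosed_subset (isCompact_closedBall (0 : crsE m) R)
    ?_ Set.inter_subset_right
  apply IsClosed.inter ?_ Metric.isClosed_closedBall
  have h1 : IsClosed {p : crsE m | ∀ l, 0 ≤ p.1 l} := by
    have : {p : crsE m | ∀ l, 0 ≤ p.1 l} = ⋂ l, {p | 0 ≤ p.1 l} := by
      ext p; simp [Set.mem_iInter]
    rw [this]
    exact isClosed_iInter fun l =>
      isClosed_le continuous_const ((continuous_apply l).comp continuous_fst)
  have h2 : IsClosed {p : crsE m | δ ≤ crsNorm p.1} :=
    isClosed_le continuous_const crsNorm_cont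
  have h3 : IsClosed {p : crsE m | ∀ k, δ ≤ crsLamTot lam pi p.1 p.2.2 k} := by
    have : {p : crsE m | ∀ k, δ ≤ crsLamTot lam pi p.1 p.2.2 k} =
        ⋂ k, {p | δ ≤ crsLamTot lam pi p.1 p.2.2 k} := by
      ext p; simp [Set.mem_iInter]
    rw [this]
    exact isClosed_iInter fun k =>
      isClosed_le continuous_const (crsLamTot_cont lam pi k)
  have : {p : crsE m | (∀ l, 0 ≤ p.1 l) ∧ δ ≤ crsNorm p.1 ∧
      ∀ k, δ ≤ crsLamTot lam pi p.1 p.2.2 k} =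
      {p : crsE m | ∀ l, 0 ≤ p.1 l} ∩ ({p : crsE m | δ ≤ crsNorm p.1} ∩
        {p : crsE m | ∀ k, δ ≤ crsLamTot lam pi p.1 p.2.2 k}) := by
    ext p
    simp only [Set.mem_setOf_eq, Set.mem_inter_iff]
  rw [this]
  exact h1.inter (h2.inter h3)

end CrsAux

/-- Uniqueness of solutions of the limiting ODE system of the chain-referral sampling
process on a stochastic block model: two continuous solutions of the integral equation
`x_t = x_0 + ∫_0^t f(x_s) ds` on `[0, T]` with the same initial condition, whose `a`-parts
are nonnegative with `‖a_t‖ ≥ δ` and `Λ^k(x_t) ≥ δ`, coincide on `[0, T]`. -/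
theorem crs_ode_uniqueness (m c : ℕ) (hm : 1 ≤ m) (hc : 1 ≤ c)
    (pi : Fin m → ℝ) (hpi0 : ∀ l, 0 ≤ pi l) (hpi : ∑ l, pi l = 1)
    (lam : Fin m → Fin m → ℝ) (hlam0 : ∀ k l, 0 ≤ lam k l)
    (hlamsymm : ∀ k l, lam k l = lam l k)
    (T δ : ℝ) (hT0 : 0 < T) (hT1 : T ≤ 1) (hδ : 0 < δ)
    (a₁ b₁ u₁ a₂ b₂ u₂ : ℝ → Fin m → ℝ)
    (hconta₁ : ContinuousOn a₁ (Set.Icc 0 T)) (hcontb₁ : ContinuousOn b₁ (Set.Icc 0 T))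
    (hcontu₁ : ContinuousOn u₁ (Set.Icc 0 T))
    (hconta₂ : ContinuousOn a₂ (Set.Icc 0 T)) (hcontb₂ : ContinuousOn b₂ (Set.Icc 0 T))
    (hcontu₂ : ContinuousOn u₂ (Set.Icc 0 T))
    (h0a : a₁ 0 = a₂ 0) (h0b : b₁ 0 = b₂ 0) (h0u : u₁ 0 = u₂ 0)
    (heqa₁ : ∀ t ∈ Set.Icc (0 : ℝ) T, ∀ l,
      a₁ t l = a₁ 0 l + ∫ s in (0 : ℝ)..t, crsF1 c lam pi (a₁ s) (u₁ s) l)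
    (heqb₁ : ∀ t ∈ Set.Icc (0 : ℝ) T, ∀ l,
      b₁ t l = b₁ 0 l + ∫ s in (0 : ℝ)..t, crsF2 c lam pi (a₁ s) (b₁ s) (u₁ s) l)
    (hequ₁ : ∀ t ∈ Set.Icc (0 : ℝ) T, ∀ l,
      u₁ t l = u₁ 0 l + ∫ s in (0 : ℝ)..t, crsF3 (a₁ s) l)
    (heqa₂ : ∀ t ∈ Set.Icc (0 : ℝ) T, ∀ l,
      a₂ t l = a₂ 0 l + ∫ s in (0 : ℝ)..t, crsF1 c lam pi (a₂ s) (u₂ s) l)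
    (heqb₂ : ∀ t ∈ Set.Icc (0 : ℝ) T, ∀ l,
      b₂ t l = b₂ 0 l + ∫ s in (0 : ℝ)..t, crsF2 c lam pi (a₂ s) (b₂ s) (u₂ s) l)
    (hequ₂ : ∀ t ∈ Set.Icc (0 : ℝ) T, ∀ l,
      u₂ t l = u₂ 0 l + ∫ s in (0 : ℝ)..t, crsF3 (a₂ s) l)
    (hpos₁ : ∀ t ∈ Set.Icc (0 : ℝ) T, (∀ l, 0 ≤ a₁ t l) ∧ δ ≤ crsNorm (a₁ t) ∧
      ∀ k, δ ≤ crsLamTot lam pi (a₁ t) (u₁ t) k)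
    (hpos₂ : ∀ t ∈ Set.Icc (0 : ℝ) T, (∀ l, 0 ≤ a₂ t l) ∧ δ ≤ crsNorm (a₂ t) ∧
      ∀ k, δ ≤ crsLamTot lam pi (a₂ t) (u₂ t) k) :
    ∀ t ∈ Set.Icc (0 : ℝ) T, a₁ t = a₂ t ∧ b₁ t = b₂ t ∧ u₁ t = u₂ t := by
  classical
  -- trajectories
  set x₁ : ℝ → crsE m := fun t => (a₁ t, b₁ t, u₁ t) with hx₁def
  set x₂ : ℝ → crsE m := fun t => (a₂ t, b₂ t, u₂ t) with hx₂def
  have hcx₁ : ContinuousOn x₁ (Set.Icc 0 T) :=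
    hconta₁.prodMk (hcontb₁.prodMk hcontu₁)
  have hcx₂ : ContinuousOn x₂ (Set.Icc 0 T) :=
    hconta₂.prodMk (hcontb₂.prodMk hcontu₂)
  -- a ball containing both trajectories
  obtain ⟨R₁, hR₁⟩ := ((isCompact_Icc.image_of_continuousOn hcx₁).isBounded).subset_closedBall
    (0 : crsE m)
  obtain ⟨R₂, hR₂⟩ := ((isCompact_Icc.image_of_continuousOn hcx₂).isBounded).subset_closedBall
    (0 : crsE m)
  set R : ℝ := max R₁ R₂ with hRdef
  set S : Set (crsE m) := crsS lam pi δ R with hSdef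
  have hmem₁ : ∀ t ∈ Set.Icc (0:ℝ) T, x₁ t ∈ S := by
    intro t ht
    refine ⟨hpos₁ t ht, ?_⟩
    have : x₁ t ∈ Metric.closedBall (0 : crsE m) R₁ := hR₁ ⟨t, ht, rfl⟩
    exact Metric.closedBall_subset_closedBall (le_max_left _ _) this
  have hmem₂ : ∀ t ∈ Set.Icc (0:ℝ) T, x₂ t ∈ S := by
    intro t ht
    refine ⟨hpos₂ t ht, ?_⟩
    have : x₂ t ∈ Metric.closedBall (0 : crsE m) R₂ := hR₂ ⟨t, ht, rfl⟩
    exact Metric.closedBall_subset_closedBall (le_max_right _ _) this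
  -- S sits inside the open set U
  have hSU : S ⊆ crsU lam pi := by
    intro p hp
    exact ⟨lt_of_lt_of_le hδ hp.1.2.1, fun k => lt_of_lt_of_le hδ (hp.1.2.2 k)⟩
  -- Lipschitz constant
  obtain ⟨K, hK⟩ := crs_lipschitz_aux (crsU_isOpen lam pi) (crsF_contDiffOn c lam pi)
    hSU (crsS_compact lam pi δ R) (crsS_convex lam pi δ R)
  -- continuity of the composed vector field along each trajectory
  have hG₁ : ContinuousOn (fun s => crsF c lam pi (x₁ s)) (Set.Icc 0 T) :=
    (crsF_contDiffOn c lam pi).continuousOn.comp hcx₁ fun t ht => hSU (hmem₁ t ht)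
  have hG₂ : ContinuousOn (fun s => crsF c lam pi (x₂ s)) (Set.Icc 0 T) :=
    (crsF_contDiffOn c lam pi).continuousOn.comp hcx₂ fun t ht => hSU (hmem₂ t ht)
  -- derivatives
  have hd₁ : ∀ t ∈ Set.Ico (0:ℝ) T,
      HasDerivWithinAt x₁ (crsF c lam pi (x₁ t)) (Set.Ici t) t := by
    intro t ht
    have hda : HasDerivWithinAt a₁ (fun l => crsF1 c lam pi (a₁ t) (u₁ t) l)
        (Set.Ici t) t := by
      apply hasDerivWithinAt_pi.2
      intro l
      apply crs_ftc_aux (fun s => crsF1 c lam pi (a₁ s) (u₁ s) l) (fun u => a₁ u l)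
        ?_ (fun u hu => heqa₁ u hu l) ht
      exact ((continuous_apply l).comp continuous_fst).comp_continuousOn hG₁
    have hdb : HasDerivWithinAt b₁ (fun l => crsF2 c lam pi (a₁ t) (b₁ t) (u₁ t) l)
        (Set.Ici t) t := by
      apply hasDerivWithinAt_pi.2
      intro l
      apply crs_ftc_aux (fun s => crsF2 c lam pi (a₁ s) (b₁ s) (u₁ s) l) (fun u => b₁ u l)
        ?_ (fun u hu => heqb₁ u hu l) ht
      exact ((continuous_apply l).comp (continuous_fst.comp continuous_snd)).comp_continuousOn hG₁
    have hdu : HasDerivWithinAt u₁ (fun l => crsF3 (a₁ t) l) (Set.Ici t) t := by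
      apply hasDerivWithinAt_pi.2
      intro l
      apply crs_ftc_aux (fun s => crsF3 (a₁ s) l) (fun u => u₁ u l)
        ?_ (fun u hu => hequ₁ u hu l) ht
      exact ((continuous_apply l).comp
        (continuous_snd.comp continuous_snd)).comp_continuousOn hG₁
    exact hda.prodMk (hdb.prodMk hdu)
  have hd₂ : ∀ t ∈ Set.Ico (0:ℝ) T,
      HasDerivWithinAt x₂ (crsF c lam pi (x₂ t)) (Set.Ici t) t := by
    intro t ht
    have hda : HasDerivWithinAt a₂ (fun l => crsF1 c lam pi (a₂ t) (u₂ t) l)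
        (Set.Ici t) t := by
      apply hasDerivWithinAt_pi.2
      intro l
      apply crs_ftc_aux (fun s => crsF1 c lam pi (a₂ s) (u₂ s) l) (fun u => a₂ u l)
        ?_ (fun u hu => heqa₂ u hu l) ht
      exact ((continuous_apply l).comp continuous_fst).comp_continuousOn hG₂
    have hdb : HasDerivWithinAt b₂ (fun l => crsF2 c lam pi (a₂ t) (b₂ t) (u₂ t) l)
        (Set.Ici t) t := by
      apply hasDerivWithinAt_pi.2
      intro l
      apply crs_ftc_aux (fun s => crsF2 c lam pi (a₂ s) (b₂ s) (u₂ s) l) (fun u => b₂ u l)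
        ?_ (fun u hu => heqb₂ u hu l) ht
      exact ((continuous_apply l).comp (continuous_fst.comp continuous_snd)).comp_continuousOn hG₂
    have hdu : HasDerivWithinAt u₂ (fun l => crsF3 (a₂ t) l) (Set.Ici t) t := by
      apply hasDerivWithinAt_pi.2
      intro l
      apply crs_ftc_aux (fun s => crsF3 (a₂ s) l) (fun u => u₂ u l)
        ?_ (fun u hu => hequ₂ u hu l) ht
      exact ((continuous_apply l).comp
        (continuous_snd.comp continuous_snd)).comp_continuousOn hG₂
    exact hda.prodMk (hdb.prodMk hdu)
  -- apply the uniqueness theorem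
  have h0 : x₁ 0 = x₂ 0 := by
    simp only [hx₁def, hx₂def, h0a, h0b, h0u]
  have heq : Set.EqOn x₁ x₂ (Set.Icc 0 T) :=
    ODE_solution_unique_of_mem_Icc_right (v := fun _ => crsF c lam pi)
      (s := fun _ => S) (K := K) (fun _ _ => hK)
      hcx₁ hd₁ (fun t ht => hmem₁ t (Set.Ico_subset_Icc_self ht))
      hcx₂ hd₂ (fun t ht => hmem₂ t (Set.Ico_subset_Icc_self ht)) h0
  intro t ht
  have := heq ht
  simp only [hx₁def, hx₂def, Prod.mk.injEq] at this
  exact ⟨this.1, this.2.1, this.2.2⟩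
end
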